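/- arXiv:1608.08194 — 10 statements merged into one kernel-verified Lean document; each statement's English description precedes it below -/
import Mathlib

section
/- Let n ≥ 1, let A be a real symmetric positive definite n×n matrix all of whose eigenvalues are bounded below by λ > 0, and let B be a real n×n matrix whose symmetric part B^s = (B + Bᵀ)/2 has all eigenvalues bounded below by γ > 0. Then every eigenvalue μ ∈ ℂ of the product matrix AB satisfies Re μ ≥ γλ. -/
open Matrix

section helpers

variable {n : ℕ}

/-- Real part of the complex quadratic form of a real matrix. -/
lemma re_star_dot (M : Matrix (Fin n) (Fin n) ℝ) (u : Fin n → ℂ) :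
    (star u ⬝ᵥ (M.map Complex.ofReal *ᵥ u)).re
      = (fun i => (u i).re) ⬝ᵥ (M *ᵥ fun i => (u i).re)
        + (fun i => (u i).im) ⬝ᵥ (M *ᵥ fun i => (u i).im) := by
  simp only [dotProduct, mulVec, Pi.star_apply, map_apply, Complex.re_sum,
    Finset.mul_sum, ← Finset.sum_add_distrib]
  refine Finset.sum_congr rfl fun i _ => Finset.sum_congr rfl fun j _ => ?_
  simp [Complex.mul_re, Complex.mul_im]

lemma im_star_dot (M : Matrix (Fin n) (Fin n) ℝ) (u : Fin n → ℂ) :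
    (star u ⬝ᵥ (M.map Complex.ofReal *ᵥ u)).im
      = (fun i => (u i).re) ⬝ᵥ (M *ᵥ fun i => (u i).im)
        - (fun i => (u i).im) ⬝ᵥ (M *ᵥ fun i => (u i).re) := by
  simp only [dotProduct, mulVec, Pi.star_apply, map_apply, Complex.im_sum,
    Finset.mul_sum, ← Finset.sum_sub_distrib]
  refine Finset.sum_congr rfl fun i _ => Finset.sum_congr rfl fun j _ => ?_
  simp [Complex.mul_re, Complex.mul_im]
  ring

lemma cs_ineq (z w : Fin n → ℂ) :
    Complex.normSq (star z ⬝ᵥ w) ≤ (star z ⬝ᵥ z).re * (star w ⬝ᵥ w).re := by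
  have h := norm_inner_le_norm (𝕜 := ℂ)
    ((WithLp.equiv 2 (Fin n → ℂ)).symm z) ((WithLp.equiv 2 (Fin n → ℂ)).symm w)
  have hip : ∀ x y : Fin n → ℂ, inner ℂ ((WithLp.equiv 2 (Fin n → ℂ)).symm x)
      ((WithLp.equiv 2 (Fin n → ℂ)).symm y) = star x ⬝ᵥ y := by
    intro x y
    rw [WithLp.equiv_symm_apply, EuclideanSpace.inner_toLp_toLp, dotProduct_comm]
  rw [hip] at h
  have hz : (star z ⬝ᵥ z).re = ‖(WithLp.equiv 2 (Fin n → ℂ)).symm z‖ ^ 2 := by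
    rw [← inner_self_eq_norm_sq (𝕜 := ℂ), hip]; rfl
  have hw : (star w ⬝ᵥ w).re = ‖(WithLp.equiv 2 (Fin n → ℂ)).symm w‖ ^ 2 := by
    rw [← inner_self_eq_norm_sq (𝕜 := ℂ), hip]; rfl
  rw [hz, hw, ← Complex.sq_norm]
  calc ‖star z ⬝ᵥ w‖ ^ 2 ≤ (‖(WithLp.equiv 2 (Fin n → ℂ)).symm z‖ *
        ‖(WithLp.equiv 2 (Fin n → ℂ)).symm w‖) ^ 2 := by
        have := norm_nonneg (star z ⬝ᵥ w)
        exact pow_le_pow_left₀ this h 2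
    _ = _ := by ring

lemma dot_transpose (M : Matrix (Fin n) (Fin n) ℝ) (u v : Fin n → ℝ) :
    u ⬝ᵥ (Mᵀ *ᵥ v) = v ⬝ᵥ (M *ᵥ u) := by
  simp only [dotProduct, mulVec, Finset.mul_sum, transpose_apply]
  rw [Finset.sum_comm]
  refine Finset.sum_congr rfl fun i _ => Finset.sum_congr rfl fun j _ => by ring

lemma re_star_dot_self (u : Fin n → ℂ) :
    (star u ⬝ᵥ u).re = ∑ i, Complex.normSq (u i) := by
  simp [dotProduct, Complex.normSq_apply, Complex.mul_re]

lemma re_star_dot_self_nonneg (u : Fin n → ℂ) : 0 ≤ (star u ⬝ᵥ u).re := by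
  rw [re_star_dot_self]
  exact Finset.sum_nonneg fun i _ => Complex.normSq_nonneg _

end helpers

/-- If `A` is real symmetric positive definite with all eigenvalues at least
`lam > 0` (i.e. `xᵀAx ≥ lam‖x‖²` for all `x`) and the symmetric part of `B` has all eigenvalues
at least `γ > 0`, then every (complex) eigenvalue `μ` of `A * B` satisfies `Re μ ≥ γ * lam`. -/
theorem spectrum_re_mul_lower_bound
    (n : ℕ) (hn : 1 ≤ n) (lam γ : ℝ) (hlam : 0 < lam) (hγ : 0 < γ)
    (A B : Matrix (Fin n) (Fin n) ℝ)
    (hA : A.PosDef)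
    (hAlb : ∀ x : Fin n → ℝ, lam * (x ⬝ᵥ x) ≤ x ⬝ᵥ (A *ᵥ x))
    (hB : ∀ x : Fin n → ℝ, γ * (x ⬝ᵥ x) ≤ x ⬝ᵥ (((2 : ℝ)⁻¹ • (B + Bᵀ)) *ᵥ x)) :
    ∀ μ ∈ spectrum ℂ ((A * B).map Complex.ofReal), γ * lam ≤ μ.re := by
  intro μ hμ
  -- obtain an eigenvector
  rw [spectrum.mem_iff] at hμ
  set M : Matrix (Fin n) (Fin n) ℂ := (A * B).map Complex.ofReal with hM
  rw [Algebra.algebraMap_eq_smul_one] at hμ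
  have hdet : (μ • (1 : Matrix (Fin n) (Fin n) ℂ) - M).det = 0 := by
    by_contra hd
    exact hμ ((isUnit_iff_isUnit_det _).2 (isUnit_iff_ne_zero.2 hd))
  obtain ⟨z, hz0, hz⟩ := (Matrix.exists_mulVec_eq_zero_iff).2 hdet
  have hMz : M *ᵥ z = μ • z := by
    have := hz
    rw [sub_mulVec, smul_mulVec, one_mulVec, sub_eq_zero] at this
    exact this.symm
  set w : Fin n → ℂ := B.map Complex.ofReal *ᵥ z with hw
  have hmul : (A * B).map Complex.ofReal = A.map Complex.ofReal * B.map Complex.ofReal := by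
    ext i j; simp [Matrix.mul_apply]
  have hAw : (A.map Complex.ofReal) *ᵥ w = μ • z := by
    rw [hw, mulVec_mulVec, ← hmul]; exact hMz
  set c : ℂ := star z ⬝ᵥ w with hc
  set a : ℂ := star w ⬝ᵥ ((A.map Complex.ofReal) *ᵥ w) with ha
  set Z : ℝ := (star z ⬝ᵥ z).re with hZ
  set W : ℝ := (star w ⬝ᵥ w).re with hW
  -- B-bound on real vectors
  have hBx : ∀ x : Fin n → ℝ, γ * (x ⬝ᵥ x) ≤ x ⬝ᵥ (B *ᵥ x) := by
    intro x
    have h := hB x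
    rw [smul_mulVec, add_mulVec, dotProduct_smul, dotProduct_add,
      dot_transpose] at h
    have : x ⬝ᵥ (B *ᵥ x) + x ⬝ᵥ (B *ᵥ x) = 2 * (x ⬝ᵥ (B *ᵥ x)) := by ring
    rw [smul_eq_mul, this] at h
    linarith
  -- lower bound for c.re
  have hcre : γ * Z ≤ c.re := by
    rw [hc, hw, hZ, re_star_dot, re_star_dot_self]
    have h1 := hBx (fun i => (z i).re)
    have h2 := hBx (fun i => (z i).im)
    have : ∑ i, Complex.normSq (z i)
        = (fun i => (z i).re) ⬝ᵥ (fun i => (z i).re)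
          + (fun i => (z i).im) ⬝ᵥ (fun i => (z i).im) := by
      simp [dotProduct, Complex.normSq_apply, Finset.sum_add_distrib, sq]
    rw [this]
    linarith
  have hZpos : 0 < Z := by
    rw [hZ, re_star_dot_self]
    obtain ⟨i, hi⟩ := Function.ne_iff.1 hz0
    exact Finset.sum_pos' (fun j _ => Complex.normSq_nonneg _)
      ⟨i, Finset.mem_univ i, Complex.normSq_pos.2 hi⟩
  have hWnn : 0 ≤ W := re_star_dot_self_nonneg w
  -- lower bound for a.re
  have hare : lam * W ≤ a.re := by
    rw [ha, hW, re_star_dot, re_star_dot_self]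
    have h1 := hAlb (fun i => (w i).re)
    have h2 := hAlb (fun i => (w i).im)
    have : ∑ i, Complex.normSq (w i)
        = (fun i => (w i).re) ⬝ᵥ (fun i => (w i).re)
          + (fun i => (w i).im) ⬝ᵥ (fun i => (w i).im) := by
      simp [dotProduct, Complex.normSq_apply, Finset.sum_add_distrib, sq]
    rw [this]
    linarith
  -- a is real
  have haim : a.im = 0 := by
    rw [ha, im_star_dot]
    have hsym : Aᵀ = A := hA.1
    have h := dot_transpose A (fun i => (w i).re) (fun i => (w i).im)
    rw [hsym] at h
    linarith
  -- a = μ * conj c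
  have hac : a = μ * (starRingEnd ℂ) c := by
    have hsw : star w ⬝ᵥ z = (starRingEnd ℂ) (star z ⬝ᵥ w) := by
      simp [dotProduct, map_sum, mul_comm]
    rw [ha, hAw, dotProduct_smul, hc, hsw, smul_eq_mul]
  have hN : Complex.normSq c ≤ Z * W := cs_ineq z w
  have hcpos : 0 < c.re := lt_of_lt_of_le (by positivity) hcre
  have hNpos : 0 < Complex.normSq c := Complex.normSq_pos.2 (by
    intro h; rw [h] at hcpos; simp at hcpos)
  have h1 : a.re = μ.re * c.re + μ.im * c.im := by
    rw [hac]; simp [Complex.mul_re]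
  have h2 : μ.im * c.re - μ.re * c.im = 0 := by
    have := haim
    rw [hac] at this
    simp [Complex.mul_im] at this
    linarith
  have key : a.re * c.re = μ.re * Complex.normSq c := by
    rw [Complex.normSq_apply]
    linear_combination c.re * h1 + c.im * h2
  have hprod : lam * W * (γ * Z) ≤ a.re * c.re := by
    have hγZ : 0 ≤ γ * Z := by positivity
    have hlamW : 0 ≤ lam * W := by positivity
    exact mul_le_mul hare hcre hγZ (le_trans hlamW hare)
  have : γ * lam * Complex.normSq c ≤ μ.re * Complex.normSq c := by
    calc γ * lam * Complex.normSq c ≤ γ * lam * (Z * W) := by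
          have : 0 ≤ γ * lam := by positivity
          nlinarith
      _ = lam * W * (γ * Z) := by ring
      _ ≤ a.re * c.re := hprod
      _ = μ.re * Complex.normSq c := key
  exact le_of_mul_le_mul_right (by linarith) hNpos
end

section
/- Let n ≥ 1 and let A be an n×n complex matrix whose Hermitian part A^s = (A + Aᴴ)/2 has all eigenvalues bounded below by λ > 0. Then A is invertible, and every eigenvalue of the Hermitian part (A⁻¹ + (A⁻¹)ᴴ)/2 of A⁻¹ is at least λ/‖A‖², where ‖A‖ denotes the ℓ²-operator norm of A. -/
open Matrix
open scoped Matrix.Norms.L2Operator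

section Aux

open scoped ComplexOrder

private lemma conj_quad {n : ℕ} (M : Matrix (Fin n) (Fin n) ℂ) (x : Fin n → ℂ) :
    star x ⬝ᵥ Mᴴ *ᵥ x = star (star x ⬝ᵥ M *ᵥ x) := by
  rw [star_dotProduct, star_mulVec, conjTranspose_conjTranspose, ← dotProduct_mulVec]

private lemma herm_re {n : ℕ} (M : Matrix (Fin n) (Fin n) ℂ) (x : Fin n → ℂ) :
    (star x ⬝ᵥ ((2:ℂ)⁻¹ • (M + Mᴴ)) *ᵥ x).re = (star x ⬝ᵥ M *ᵥ x).re := by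
  rw [smul_mulVec, dotProduct_smul, add_mulVec, dotProduct_add, conj_quad]
  set z := star x ⬝ᵥ M *ᵥ x
  have : z + star z = (2 * z.re : ℝ) := by simpa using Complex.add_conj z
  rw [smul_eq_mul, this]
  push_cast
  rw [show (2:ℂ)⁻¹ * (2 * (z.re:ℂ)) = (z.re:ℂ) by ring]
  simp

private lemma dot_self_re {n : ℕ} (v : Fin n → ℂ) :
    (star v ⬝ᵥ v).re = ∑ i, ‖v i‖^2 ∧ (star v ⬝ᵥ v).im = 0 := by
  have h : star v ⬝ᵥ v = ((∑ i, ‖v i‖^2 : ℝ) : ℂ) := by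
    unfold dotProduct
    rw [Complex.ofReal_sum]
    refine Finset.sum_congr rfl fun i _ => ?_
    rw [Pi.star_apply, Complex.star_def, ← Complex.normSq_eq_conj_mul_self,
      Complex.normSq_eq_norm_sq]
  exact ⟨by rw [h]; exact Complex.ofReal_re _, by rw [h]; exact Complex.ofReal_im _⟩

private lemma dot_self_pos {n : ℕ} {v : Fin n → ℂ} (hv : v ≠ 0) :
    0 < (star v ⬝ᵥ v).re := by
  rw [(dot_self_re v).1]
  obtain ⟨i, hi⟩ : ∃ i, v i ≠ 0 := by
    by_contra h; push_neg at h; exact hv (funext h)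
  exact Finset.sum_pos' (fun j _ => sq_nonneg _)
    ⟨i, Finset.mem_univ i, pow_pos (norm_pos_iff.mpr hi) 2⟩

private lemma euclid_norm_sq {n : ℕ} (v : Fin n → ℂ) :
    ‖(EuclideanSpace.equiv (Fin n) ℂ).symm v‖^2 = (star v ⬝ᵥ v).re := by
  rw [(dot_self_re v).1, EuclideanSpace.norm_eq, Real.sq_sqrt]
  · rfl
  · positivity

private lemma quad_lower {n : ℕ} (B : Matrix (Fin n) (Fin n) ℂ) (hB : B.IsHermitian) (c : ℝ)
    (h : ∀ μ ∈ spectrum ℂ B, c ≤ μ.re) (x : Fin n → ℂ) :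
    c * (star x ⬝ᵥ x).re ≤ (star x ⬝ᵥ B *ᵥ x).re := by
  set B' : Matrix (Fin n) (Fin n) ℂ := B - (c : ℂ) • 1 with hB'def
  have h1 : ((c:ℂ) • (1 : Matrix (Fin n) (Fin n) ℂ)).IsHermitian := by
    unfold Matrix.IsHermitian
    rw [conjTranspose_smul, isHermitian_one.eq]
    simp [Complex.star_def, Complex.conj_ofReal]
  have hB' : B'.IsHermitian := hB.sub h1
  have hpsd : B'.PosSemidef := by
    apply hB'.posSemidef_iff_eigenvalues_nonneg.mpr
    intro i
    set e := hB'.eigenvalues i with he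
    have hmem : (e : ℂ) ∈ spectrum ℂ B' :=
      spectrum.algebraMap_mem ℂ (hB'.eigenvalues_mem_spectrum_real i)
    have hmem2 : ((e : ℂ) + c) ∈ spectrum ℂ B := by
      rw [spectrum.mem_iff] at hmem ⊢
      convert hmem using 2
      rw [hB'def]
      simp [Algebra.algebraMap_eq_smul_one, add_smul]
      abel
    have := h _ hmem2
    simp at this
    exact this
  have h0 := hpsd.re_dotProduct_nonneg x
  rw [hB'def, sub_mulVec, dotProduct_sub, smul_mulVec, one_mulVec, dotProduct_smul] at h0
  have h0' : (0:ℝ) ≤ (star x ⬝ᵥ B *ᵥ x).re - c * (star x ⬝ᵥ x).re := by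
    convert h0 using 1
    rw [smul_eq_mul]
    simp [Complex.sub_re, Complex.mul_re]
  linarith

private lemma spec_vec {n : ℕ} {C : Matrix (Fin n) (Fin n) ℂ} {μ : ℂ}
    (h : μ ∈ spectrum ℂ C) : ∃ v ≠ 0, C *ᵥ v = μ • v := by
  rw [spectrum.mem_iff] at h
  have hdet : (algebraMap ℂ (Matrix (Fin n) (Fin n) ℂ) μ - C).det = 0 := by
    by_contra hd
    exact h ((isUnit_iff_isUnit_det _).mpr (isUnit_iff_ne_zero.mpr hd))
  obtain ⟨v, hv, hveq⟩ := (Matrix.exists_mulVec_eq_zero_iff).mpr hdet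
  refine ⟨v, hv, ?_⟩
  rw [sub_mulVec] at hveq
  have : algebraMap ℂ (Matrix (Fin n) (Fin n) ℂ) μ *ᵥ v = μ • v := by
    rw [Algebra.algebraMap_eq_smul_one, smul_mulVec, one_mulVec]
  rw [this] at hveq
  linear_combination (norm := module) -hveq

end Aux

/-- If the Hermitian part of a complex `n×n` matrix `A` has all eigenvalues at
least `lam > 0`, then `A` is invertible and the Hermitian part of `A⁻¹` has all eigenvalues at
least `lam / ‖A‖²`, where `‖·‖` is the ℓ²-operator norm. -/
theorem inv_hermitianPart_eigenvalue_lower_bound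
    (n : ℕ) (hn : 1 ≤ n) (lam : ℝ) (hlam : 0 < lam)
    (A : Matrix (Fin n) (Fin n) ℂ)
    (hA : ∀ μ ∈ spectrum ℂ ((2 : ℂ)⁻¹ • (A + Aᴴ)), lam ≤ μ.re) :
    IsUnit A ∧
      ∀ μ ∈ spectrum ℂ ((2 : ℂ)⁻¹ • (A⁻¹ + (A⁻¹)ᴴ)), lam / ‖A‖ ^ 2 ≤ μ.re := by
  haveI : Nonempty (Fin n) := Fin.pos_iff_nonempty.mp hn
  have hBh : ((2 : ℂ)⁻¹ • (A + Aᴴ)).IsHermitian := by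
    unfold Matrix.IsHermitian
    rw [conjTranspose_smul, conjTranspose_add, conjTranspose_conjTranspose]
    rw [show star ((2:ℂ)⁻¹) = (2:ℂ)⁻¹ by simp, add_comm]
  -- quadratic form lower bound for A
  have hquadA : ∀ x : Fin n → ℂ, lam * (star x ⬝ᵥ x).re ≤ (star x ⬝ᵥ A *ᵥ x).re := by
    intro x
    have := quad_lower _ hBh lam hA x
    rwa [herm_re] at this
  -- A is invertible
  have hdet : A.det ≠ 0 := by
    intro hd
    obtain ⟨v, hv, hveq⟩ := Matrix.exists_mulVec_eq_zero_iff.mpr hd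
    have h1 := hquadA v
    rw [hveq] at h1
    simp at h1
    nlinarith [dot_self_pos hv]
  have hU : IsUnit A := (isUnit_iff_isUnit_det A).mpr (isUnit_iff_ne_zero.mpr hdet)
  refine ⟨hU, ?_⟩
  have hA0 : A ≠ 0 := fun h => hdet (by simp [h, Matrix.det_zero (n := Fin n)])
  have hnA : 0 < ‖A‖ := norm_pos_iff.mpr hA0
  -- key quadratic bound for A⁻¹
  have hkey : ∀ v : Fin n → ℂ,
      (lam / ‖A‖ ^ 2) * (star v ⬝ᵥ v).re ≤ (star v ⬝ᵥ A⁻¹ *ᵥ v).re := by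
    intro v
    set y := A⁻¹ *ᵥ v with hy
    have hAy : A *ᵥ y = v := by
      rw [hy, mulVec_mulVec, Matrix.mul_nonsing_inv A (isUnit_iff_ne_zero.mpr hdet),
        one_mulVec]
    have hre : (star v ⬝ᵥ A⁻¹ *ᵥ v).re = (star y ⬝ᵥ A *ᵥ y).re := by
      rw [← hy]
      conv_lhs => rw [← hAy]
      rw [star_mulVec, ← dotProduct_mulVec, conj_quad]
      exact Complex.conj_re _
    rw [hre]
    have h1 : lam * (star y ⬝ᵥ y).re ≤ (star y ⬝ᵥ A *ᵥ y).re := hquadA y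
    -- norm inequality
    have h2 : (star v ⬝ᵥ v).re ≤ ‖A‖^2 * (star y ⬝ᵥ y).re := by
      have := Matrix.l2_opNorm_mulVec A ((EuclideanSpace.equiv (Fin n) ℂ).symm y)
      have hnn : (0:ℝ) ≤ ‖A‖ * ‖(EuclideanSpace.equiv (Fin n) ℂ).symm y‖ := by positivity
      have hsq := mul_self_le_mul_self (norm_nonneg _) this
      rw [← euclid_norm_sq v, ← euclid_norm_sq y, ← hAy]
      calc ‖(EuclideanSpace.equiv (Fin n) ℂ).symm (A *ᵥ y)‖ ^ 2
          ≤ (‖A‖ * ‖(EuclideanSpace.equiv (Fin n) ℂ).symm y‖)^2 := by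
            rw [sq, sq]; exact hsq
        _ = ‖A‖^2 * ‖(EuclideanSpace.equiv (Fin n) ℂ).symm y‖^2 := by ring
    have hyn : 0 ≤ (star y ⬝ᵥ y).re := by
      rw [(dot_self_re y).1]; positivity
    have hA2 : (0:ℝ) < ‖A‖^2 := by positivity
    calc (lam / ‖A‖ ^ 2) * (star v ⬝ᵥ v).re
        ≤ (lam / ‖A‖ ^ 2) * (‖A‖^2 * (star y ⬝ᵥ y).re) := by
          apply mul_le_mul_of_nonneg_left h2; positivity
      _ = lam * (star y ⬝ᵥ y).re := by field_simp
      _ ≤ (star y ⬝ᵥ A *ᵥ y).re := h1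
  -- conclude for every spectral point of the hermitian part of A⁻¹
  intro μ hμ
  obtain ⟨v, hv, hveq⟩ := spec_vec hμ
  have hN : 0 < (star v ⬝ᵥ v).re := dot_self_pos hv
  have him : (star v ⬝ᵥ v).im = 0 := (dot_self_re v).2
  have h1 : (star v ⬝ᵥ ((2 : ℂ)⁻¹ • (A⁻¹ + (A⁻¹)ᴴ)) *ᵥ v).re = μ.re * (star v ⬝ᵥ v).re := by
    rw [hveq, dotProduct_smul, smul_eq_mul, Complex.mul_re, him]
    ring
  have h2 := hkey v
  rw [← herm_re, h1] at h2
  exact le_of_mul_le_mul_right h2 hN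
end

section
/- Let n ≥ 1, let 0 < c ≤ C, and let A be a real symmetric n×n matrix all of whose eigenvalues lie in the interval [c, C]. Let B be a real n×n matrix whose symmetric part (B + Bᵀ)/2 has all eigenvalues bounded below by λ > 0. Then for every y ≥ 0, the matrix exponential satisfies ‖exp(−y · A B)‖ ≤ √(C/c) · e^{−cλy}, where ‖·‖ denotes the ℓ²-operator norm. -/
open Matrix
open scoped Matrix.Norms.L2Operator InnerProductSpace MatrixOrder

set_option maxHeartbeats 1000000
set_option synthInstance.maxHeartbeats 400000

section Aux

variable {n : ℕ}

lemma myInner_eq_dot (x y : EuclideanSpace ℝ (Fin n)) :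
    ⟪x, y⟫_ℝ = x.ofLp ⬝ᵥ y.ofLp := by
  simp [PiLp.inner_apply, RCLike.inner_apply, dotProduct, mul_comm]

lemma myDot_symm_mulVec {S : Matrix (Fin n) (Fin n) ℝ} (hS : Sᵀ = S)
    (v w : Fin n → ℝ) : (S *ᵥ v) ⬝ᵥ w = v ⬝ᵥ (S *ᵥ w) := by
  rw [dotProduct_mulVec]
  conv_rhs => rw [← hS]
  rw [vecMul_transpose]

/-- Operator norm bound from a quadratic bound. -/
lemma myMat_opNorm_le (M : Matrix (Fin n) (Fin n) ℝ) {K : ℝ} (hK : 0 ≤ K)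
    (h : ∀ v : Fin n → ℝ, (M *ᵥ v) ⬝ᵥ (M *ᵥ v) ≤ K ^ 2 * (v ⬝ᵥ v)) : ‖M‖ ≤ K := by
  rw [Matrix.cstar_norm_def]
  refine ContinuousLinearMap.opNorm_le_bound _ hK fun x => ?_
  have h2 : ‖(Matrix.toEuclideanCLM (𝕜 := ℝ) M) x‖ ^ 2 ≤ (K * ‖x‖) ^ 2 := by
    rw [← real_inner_self_eq_norm_sq, myInner_eq_dot, Matrix.ofLp_toEuclideanCLM]
    calc (M *ᵥ _) ⬝ᵥ (M *ᵥ _) ≤ K ^ 2 * (x.ofLp ⬝ᵥ x.ofLp) := h _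
    _ = (K * ‖x‖) ^ 2 := by
        rw [← myInner_eq_dot, real_inner_self_eq_norm_sq]; ring
  calc ‖(Matrix.toEuclideanCLM (𝕜 := ℝ) M) x‖
      = Real.sqrt (‖(Matrix.toEuclideanCLM (𝕜 := ℝ) M) x‖ ^ 2) := by
        rw [Real.sqrt_sq (norm_nonneg _)]
    _ ≤ Real.sqrt ((K * ‖x‖) ^ 2) := Real.sqrt_le_sqrt h2
    _ = K * ‖x‖ := Real.sqrt_sq (by positivity)

/-- Decay of the semigroup generated by `-T` when `T` has coercive symmetric part. -/
lemma myCLM_exp_decay {E : Type*} [NormedAddCommGroup E] [InnerProductSpace ℝ E]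
    [CompleteSpace E] (T : E →L[ℝ] E) (μ : ℝ)
    (hT : ∀ x : E, μ * ⟪x, x⟫_ℝ ≤ ⟪x, T x⟫_ℝ) {y : ℝ} (hy : 0 ≤ y) :
    ‖NormedSpace.exp (-(y • T))‖ ≤ Real.exp (-(μ * y)) := by
  refine ContinuousLinearMap.opNorm_le_bound _ (Real.exp_nonneg _) fun x => ?_
  set g : ℝ → E := fun t => (NormedSpace.exp (-(t • T))) x with hgdef
  have hgd : ∀ t : ℝ, HasDerivAt g (-T (g t)) t := by
    intro t
    have h1 := hasDerivAt_exp_smul_const' (𝕂 := ℝ) (-T) t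
    have h2 := (ContinuousLinearMap.apply ℝ E x).hasFDerivAt.comp_hasDerivAt t h1
    simpa [Function.comp_def, ContinuousLinearMap.mul_apply, smul_neg] using h2
  set h : ℝ → ℝ := fun t => Real.exp (2 * μ * t) * ⟪g t, g t⟫_ℝ with hhdef
  have hhd : ∀ t : ℝ, HasDerivAt h
      ((2 * μ * Real.exp (2 * μ * t)) * ⟪g t, g t⟫_ℝ
        + Real.exp (2 * μ * t) * (⟪g t, -T (g t)⟫_ℝ + ⟪-T (g t), g t⟫_ℝ)) t := by
    intro t
    have d1 : HasDerivAt (fun t : ℝ => Real.exp (2 * μ * t)) (Real.exp (2 * μ * t) * (2 * μ)) t := by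
      simpa using ((hasDerivAt_id t).const_mul (2 * μ)).exp
    have d2 := (hgd t).inner ℝ (hgd t)
    have : HasDerivAt h (Real.exp (2 * μ * t) * (2 * μ) * ⟪g t, g t⟫_ℝ
        + Real.exp (2 * μ * t) * (⟪g t, -T (g t)⟫_ℝ + ⟪-T (g t), g t⟫_ℝ)) t := d1.fun_mul d2
    convert this using 1
    ring
  have hderiv_nonpos : ∀ t : ℝ, deriv h t ≤ 0 := by
    intro t
    rw [(hhd t).deriv]
    have h1 : μ * ⟪g t, g t⟫_ℝ ≤ ⟪g t, T (g t)⟫_ℝ := hT (g t)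
    have h2 : ⟪-T (g t), g t⟫_ℝ = ⟪g t, -T (g t)⟫_ℝ := real_inner_comm _ _
    have h3 : ⟪g t, -T (g t)⟫_ℝ = -⟪g t, T (g t)⟫_ℝ := by
      simp [inner_neg_right]
    have he : (0:ℝ) < Real.exp (2 * μ * t) := Real.exp_pos _
    rw [h2, h3]
    nlinarith [he]
  have hanti : Antitone h := by
    refine antitone_of_deriv_nonpos (fun t => (hhd t).differentiableAt) hderiv_nonpos
  have hh0 : h 0 = ⟪x, x⟫_ℝ := by
    simp [hhdef, hgdef, NormedSpace.exp_zero]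
  have hkey : Real.exp (2 * μ * y) * ‖g y‖ ^ 2 ≤ ‖x‖ ^ 2 := by
    have := hanti hy
    rw [hh0] at this
    rw [← real_inner_self_eq_norm_sq, ← real_inner_self_eq_norm_sq]
    exact this
  have hgy : ‖g y‖ ≤ Real.exp (-(μ * y)) * ‖x‖ := by
    have hsq : ‖g y‖ ^ 2 ≤ (Real.exp (-(μ * y)) * ‖x‖) ^ 2 := by
      have he : (0:ℝ) < Real.exp (2 * μ * y) := Real.exp_pos _
      have hexp : (Real.exp (-(μ * y))) ^ 2 * Real.exp (2 * μ * y) = 1 := by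
        rw [pow_two, ← Real.exp_add, ← Real.exp_add,
          show -(μ * y) + -(μ * y) + 2 * μ * y = 0 by ring, Real.exp_zero]
      calc ‖g y‖ ^ 2 = (Real.exp (2 * μ * y))⁻¹ * (Real.exp (2 * μ * y) * ‖g y‖ ^ 2) := by
            field_simp
        _ ≤ (Real.exp (2 * μ * y))⁻¹ * ‖x‖ ^ 2 := by
            exact mul_le_mul_of_nonneg_left hkey (by positivity)
        _ = (Real.exp (-(μ * y)) * ‖x‖) ^ 2 := by
            rw [mul_pow]
            field_simp
            nlinarith [hexp]
    calc ‖g y‖ = Real.sqrt (‖g y‖ ^ 2) := by rw [Real.sqrt_sq (norm_nonneg _)]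
      _ ≤ Real.sqrt ((Real.exp (-(μ * y)) * ‖x‖) ^ 2) := Real.sqrt_le_sqrt hsq
      _ = Real.exp (-(μ * y)) * ‖x‖ := Real.sqrt_sq (by positivity)
  exact hgy

/-- Matrix version of the decay estimate, in the ℓ² operator norm. -/
lemma myMat_exp_decay (M : Matrix (Fin n) (Fin n) ℝ) (μ : ℝ)
    (hM : ∀ v : Fin n → ℝ, μ * (v ⬝ᵥ v) ≤ v ⬝ᵥ (M *ᵥ v)) {y : ℝ} (hy : 0 ≤ y) :
    ‖NormedSpace.exp (-(y • M))‖ ≤ Real.exp (-(μ * y)) := by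
  haveI : CompleteSpace (Matrix (Fin n) (Fin n) ℝ) := FiniteDimensional.complete ℝ _
  have hiso : Isometry (Matrix.toEuclideanCLM (𝕜 := ℝ) (n := Fin n)) :=
    AddMonoidHomClass.isometry_of_norm _ (fun a => (Matrix.cstar_norm_def a).symm)
  rw [Matrix.cstar_norm_def]
  have hmap : (Matrix.toEuclideanCLM (𝕜 := ℝ) (n := Fin n)) (NormedSpace.exp (-(y • M)))
      = NormedSpace.exp (-(y • (Matrix.toEuclideanCLM (𝕜 := ℝ) M))) := by
    rw [NormedSpace.map_exp_of_mem_ball (𝕂 := ℝ) _ hiso.continuous _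
      (by rw [NormedSpace.expSeries_radius_eq_top]; exact edist_lt_top _ _)]
    congr 1
    rw [_root_.map_neg]
    congr 1
    exact _root_.map_smul _ y M
  rw [hmap]
  refine myCLM_exp_decay _ μ (fun x => ?_) hy
  rw [myInner_eq_dot, myInner_eq_dot, Matrix.ofLp_toEuclideanCLM]
  exact hM _

end Aux

/-- If `A` is real symmetric with eigenvalues in `[c, C]` and the symmetric part
of `B` has eigenvalues at least `lam > 0`, then `‖exp(−y·AB)‖ ≤ √(C/c)·e^{−cλy}` for `y ≥ 0`,
in the ℓ²-operator norm. -/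
theorem matrix_exp_decay_bound
    (n : ℕ) (hn : 1 ≤ n) (c C lam : ℝ) (hc : 0 < c) (hcC : c ≤ C) (hlam : 0 < lam)
    (A B : Matrix (Fin n) (Fin n) ℝ)
    (hAsymm : A.IsSymm)
    (hAlb : ∀ x : Fin n → ℝ, c * (x ⬝ᵥ x) ≤ x ⬝ᵥ (A *ᵥ x))
    (hAub : ∀ x : Fin n → ℝ, x ⬝ᵥ (A *ᵥ x) ≤ C * (x ⬝ᵥ x))
    (hB : ∀ x : Fin n → ℝ, lam * (x ⬝ᵥ x) ≤ x ⬝ᵥ (((2 : ℝ)⁻¹ • (B + Bᵀ)) *ᵥ x)) :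
    ∀ y : ℝ, 0 ≤ y →
      ‖NormedSpace.exp (-(y • (A * B)))‖ ≤ Real.sqrt (C / c) * Real.exp (-(c * lam * y)) := by
  intro y hy
  haveI : CompleteSpace (Matrix (Fin n) (Fin n) ℝ) := FiniteDimensional.complete ℝ _
  -- A is positive definite
  have hApd : A.PosDef := by
    refine Matrix.PosDef.of_dotProduct_mulVec_pos (by rwa [Matrix.IsHermitian, conjTranspose_eq_transpose_of_trivial]) fun x hx => ?_
    have hxx : 0 < x ⬝ᵥ x := by
      have := dotProduct_star_self_pos_iff (v := x) (R := ℝ)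
      simpa [star_trivial] using this.mpr hx
    calc (0:ℝ) < c * (x ⬝ᵥ x) := by positivity
      _ ≤ x ⬝ᵥ (A *ᵥ x) := hAlb x
      _ = star x ⬝ᵥ (A *ᵥ x) := by simp [star_trivial]
  set S := CFC.sqrt A with hSdef
  have hSpsd : S.PosSemidef := (CFC.sqrt_nonneg A).posSemidef
  have hSherm : Sᵀ = S := by
    have := hSpsd.1
    rwa [Matrix.IsHermitian, conjTranspose_eq_transpose_of_trivial] at this
  have hS2 : S * S = A := CFC.sqrt_mul_sqrt_self A hApd.posSemidef.nonneg
  have hSunit : IsUnit S := by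
    rw [Matrix.isUnit_iff_isUnit_det, isUnit_iff_ne_zero]
    intro h0
    have : det A = 0 := by rw [← hS2, det_mul, h0, mul_zero]
    exact hApd.det_pos.ne' this
  have hSinv : S * S⁻¹ = 1 := mul_nonsing_inv S ((Matrix.isUnit_iff_isUnit_det S).mp hSunit)
  -- quadratic identities
  have hSdot : ∀ v w : Fin n → ℝ, (S *ᵥ v) ⬝ᵥ w = v ⬝ᵥ (S *ᵥ w) := myDot_symm_mulVec hSherm
  have hSA : ∀ v : Fin n → ℝ, (S *ᵥ v) ⬝ᵥ (S *ᵥ v) = v ⬝ᵥ (A *ᵥ v) := by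
    intro v
    rw [hSdot, mulVec_mulVec, hS2]
  -- the symmetric-part bound for B without the symmetrization
  have hBquad : ∀ w : Fin n → ℝ, lam * (w ⬝ᵥ w) ≤ w ⬝ᵥ (B *ᵥ w) := by
    intro w
    have h1 := hB w
    have h2 : w ⬝ᵥ (Bᵀ *ᵥ w) = w ⬝ᵥ (B *ᵥ w) := by
      rw [dotProduct_mulVec, vecMul_transpose, dotProduct_comm]
    rw [smul_mulVec, dotProduct_smul, add_mulVec, dotProduct_add, h2,
      smul_eq_mul] at h1
    linarith
  -- quadratic lower bound for S * B * S
  have hquad : ∀ v : Fin n → ℝ, c * lam * (v ⬝ᵥ v) ≤ v ⬝ᵥ ((S * B * S) *ᵥ v) := by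
    intro v
    have h1 : v ⬝ᵥ ((S * B * S) *ᵥ v) = (S *ᵥ v) ⬝ᵥ (B *ᵥ (S *ᵥ v)) := by
      rw [← mulVec_mulVec, ← mulVec_mulVec, ← hSdot]
    rw [h1]
    have h2 := hBquad (S *ᵥ v)
    rw [hSA] at h2
    have h3 : c * (v ⬝ᵥ v) ≤ v ⬝ᵥ (A *ᵥ v) := hAlb v
    nlinarith [hlam.le]
  -- norm bounds for S and S⁻¹
  have hnormS : ‖S‖ ≤ Real.sqrt C := by
    refine myMat_opNorm_le S (Real.sqrt_nonneg C) fun v => ?_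
    rw [hSA, Real.sq_sqrt (hc.le.trans hcC)]
    exact hAub v
  have hnormSinv : ‖S⁻¹‖ ≤ (Real.sqrt c)⁻¹ := by
    refine myMat_opNorm_le S⁻¹ (by positivity) fun v => ?_
    set w := S⁻¹ *ᵥ v with hwdef
    have hSw : S *ᵥ w = v := by
      rw [hwdef, mulVec_mulVec, hSinv, one_mulVec]
    have h1 : c * (w ⬝ᵥ w) ≤ v ⬝ᵥ v := by
      calc c * (w ⬝ᵥ w) ≤ w ⬝ᵥ (A *ᵥ w) := hAlb w
        _ = (S *ᵥ w) ⬝ᵥ (S *ᵥ w) := (hSA w).symm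
        _ = v ⬝ᵥ v := by rw [hSw]
    have h2 : ((Real.sqrt c)⁻¹) ^ 2 = c⁻¹ := by
      rw [← Real.sqrt_inv, Real.sq_sqrt (by positivity)]
    rw [h2]
    calc w ⬝ᵥ w = c⁻¹ * (c * (w ⬝ᵥ w)) := by field_simp
      _ ≤ c⁻¹ * (v ⬝ᵥ v) := mul_le_mul_of_nonneg_left h1 (by positivity)
  -- conjugation
  obtain ⟨u, hu⟩ := hSunit
  have huinv : (↑u⁻¹ : Matrix (Fin n) (Fin n) ℝ) = S⁻¹ := by
    rw [Matrix.coe_units_inv, hu]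
  have hconj : -(y • (A * B)) = (↑u : Matrix (Fin n) (Fin n) ℝ) * (-(y • (S * B * S))) * (↑u⁻¹ : Matrix (Fin n) (Fin n) ℝ) := by
    rw [hu, huinv]
    have hSBS : S * (S * B * S) * S⁻¹ = A * B := by
      calc S * (S * B * S) * S⁻¹ = (S * S) * B * (S * S⁻¹) := by
            simp only [Matrix.mul_assoc]
        _ = A * B := by rw [hS2, hSinv, Matrix.mul_one]
    calc -(y • (A * B)) = -(y • (S * (S * B * S) * S⁻¹)) := by rw [hSBS]
      _ = S * (-(y • (S * B * S))) * S⁻¹ := by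
          rw [mul_neg, neg_mul, mul_smul_comm, smul_mul_assoc]
  rw [hconj, Matrix.exp_units_conj u _]
  have hdecay : ‖NormedSpace.exp (-(y • (S * B * S)))‖ ≤ Real.exp (-(c * lam * y)) := by
    exact myMat_exp_decay (S * B * S) (c * lam) hquad hy
  calc ‖(↑u : Matrix (Fin n) (Fin n) ℝ) * NormedSpace.exp (-(y • (S * B * S))) * (↑u⁻¹ : Matrix (Fin n) (Fin n) ℝ)‖
      ≤ ‖(↑u : Matrix (Fin n) (Fin n) ℝ) * NormedSpace.exp (-(y • (S * B * S)))‖ * ‖(↑u⁻¹ : Matrix (Fin n) (Fin n) ℝ)‖ :=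
        norm_mul_le _ _
    _ ≤ (‖(↑u : Matrix (Fin n) (Fin n) ℝ)‖ * ‖NormedSpace.exp (-(y • (S * B * S)))‖) * ‖(↑u⁻¹ : Matrix (Fin n) (Fin n) ℝ)‖ := by
        gcongr
        exact norm_mul_le _ _
    _ ≤ (Real.sqrt C * Real.exp (-(c * lam * y))) * (Real.sqrt c)⁻¹ := by
        rw [hu, huinv]
        have h1 : ‖S‖ * ‖NormedSpace.exp (-(y • (S * B * S)))‖
            ≤ Real.sqrt C * Real.exp (-(c * lam * y)) :=
          mul_le_mul hnormS hdecay (norm_nonneg _) (Real.sqrt_nonneg _)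
        exact mul_le_mul h1 hnormSinv (norm_nonneg _) (by positivity)
    _ = Real.sqrt (C / c) * Real.exp (-(c * lam * y)) := by
        rw [Real.sqrt_div (hc.le.trans hcC)]
        ring
end

section
/- Let n ≥ 1, let 0 < c ≤ C, let A be a real symmetric n×n matrix all of whose eigenvalues lie in [c, C], and let γ̃ be a real n×n matrix whose symmetric part (γ̃ + γ̃ᵀ)/2 has all eigenvalues bounded below by λ > 0. Set M = A γ̃. Then for every real n×n matrix D: (i) the matrix-valued function y ↦ exp(−yM) D exp(−yMᵀ) is Bochner integrable on [0, ∞); and (ii) the matrix V = ∫₀^∞ exp(−yM) D exp(−yMᵀ) dy is the unique real n×n matrix satisfying the Lyapunov equation M V + V Mᵀ = D. -/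
open Matrix MeasureTheory
open scoped Matrix.Norms.L2Operator

noncomputable section
namespace LyapAux

variable {n : ℕ}

open NormedSpace in
lemma exp_neg_smul_transpose (M : Matrix (Fin n) (Fin n) ℝ) (t : ℝ) :
    (exp (-(t • Mᵀ)))ᵀ = exp (-(t • M)) := by
  have := Matrix.exp_transpose (-(t • Mᵀ))
  rw [← this]
  simp

open NormedSpace in
lemma commute_exp (M : Matrix (Fin n) (Fin n) ℝ) (t : ℝ) :
    M * exp (-(t • M)) = exp (-(t • M)) * M := by
  have : Commute M (-(t • M)) := ((Commute.refl M).smul_right t).neg_right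
  exact (this.exp_right).eq

lemma dot_symm_mulVec {P : Matrix (Fin n) (Fin n) ℝ} (hP : P.IsSymm) (x w : Fin n → ℝ) :
    x ⬝ᵥ (P *ᵥ w) = (P *ᵥ x) ⬝ᵥ w := by
  rw [dotProduct_mulVec, ← Matrix.vecMul_transpose, hP.eq]

lemma dot_transpose_self (P : Matrix (Fin n) (Fin n) ℝ) (w : Fin n → ℝ) :
    w ⬝ᵥ (Pᵀ *ᵥ w) = w ⬝ᵥ (P *ᵥ w) := by
  rw [dotProduct_mulVec, Matrix.vecMul_transpose, dotProduct_comm]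

lemma dot_self_nonneg (u : Fin n → ℝ) : 0 ≤ u ⬝ᵥ u :=
  Finset.sum_nonneg fun _ _ => mul_self_nonneg _

lemma dot_cs (u w : Fin n → ℝ) : (u ⬝ᵥ w) ^ 2 ≤ (u ⬝ᵥ u) * (w ⬝ᵥ w) := by
  simpa [dotProduct, pow_two] using Finset.sum_mul_sq_le_sq_mul_sq Finset.univ u w

/-- quadratic-form continuous linear map `Y ↦ x ⬝ᵥ (Y *ᵥ x)` -/
def qf (x : Fin n → ℝ) : Matrix (Fin n) (Fin n) ℝ →L[ℝ] ℝ :=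
  LinearMap.toContinuousLinearMap
    { toFun := fun Y => x ⬝ᵥ (Y *ᵥ x)
      map_add' := by intro Y Z; simp [Matrix.add_mulVec, dotProduct_add]
      map_smul' := by intro r Y; simp [Matrix.smul_mulVec] }

@[simp] lemma qf_apply (x : Fin n → ℝ) (Y : Matrix (Fin n) (Fin n) ℝ) :
    qf x Y = x ⬝ᵥ (Y *ᵥ x) := rfl

open NormedSpace in
lemma hasDerivAt_G (M B : Matrix (Fin n) (Fin n) ℝ) (y : ℝ) :
    HasDerivAt (fun t : ℝ => exp (-(t • M)) * B * exp (-(t • Mᵀ)))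
      (-(M * (exp (-(y • M)) * B * exp (-(y • Mᵀ))) +
         (exp (-(y • M)) * B * exp (-(y • Mᵀ))) * Mᵀ)) y := by
  have h1 := hasDerivAt_exp_smul_const' (𝕂 := ℝ) (-M) y
  have h2 := hasDerivAt_exp_smul_const (𝕂 := ℝ) (-Mᵀ) y
  simp only [smul_neg] at h1 h2
  have h := (h1.mul_const B).mul h2
  refine h.congr_deriv ?_
  simp only [neg_mul, mul_neg, mul_assoc, neg_add]

open NormedSpace in
lemma dot_sandwich (M Z : Matrix (Fin n) (Fin n) ℝ) (t : ℝ) (x : Fin n → ℝ) :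
    x ⬝ᵥ ((exp (-(t • M)) * Z * exp (-(t • Mᵀ))) *ᵥ x)
      = (exp (-(t • Mᵀ)) *ᵥ x) ⬝ᵥ (Z *ᵥ (exp (-(t • Mᵀ)) *ᵥ x)) := by
  rw [← Matrix.mulVec_mulVec, ← Matrix.mulVec_mulVec, dotProduct_mulVec,
    ← exp_neg_smul_transpose, Matrix.vecMul_transpose]

open NormedSpace in
lemma dot_decay (c C lam : ℝ) (hc : 0 < c) (hlam : 0 < lam)
    (A γ' : Matrix (Fin n) (Fin n) ℝ) (hAsymm : A.IsSymm)
    (hAlb : ∀ x : Fin n → ℝ, c * (x ⬝ᵥ x) ≤ x ⬝ᵥ (A *ᵥ x))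
    (hAub : ∀ x : Fin n → ℝ, x ⬝ᵥ (A *ᵥ x) ≤ C * (x ⬝ᵥ x))
    (hγ : ∀ x : Fin n → ℝ, lam * (x ⬝ᵥ x) ≤ x ⬝ᵥ (γ' *ᵥ x))
    (x : Fin n → ℝ) {y : ℝ} (hy : 0 ≤ y) :
    (exp (-(y • (A * γ')ᵀ)) *ᵥ x) ⬝ᵥ (exp (-(y • (A * γ')ᵀ)) *ᵥ x)
      ≤ (C / c) * Real.exp (-(2 * (lam * c)) * y) * (x ⬝ᵥ x) := by
  set M := A * γ' with hM
  set ψ : ℝ → ℝ := fun t => qf x (exp (-(t • M)) * A * exp (-(t • Mᵀ))) with hψdef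
  set u : ℝ → (Fin n → ℝ) := fun t => exp (-(t • Mᵀ)) *ᵥ x with hudef
  have hψu : ∀ t, ψ t = (u t) ⬝ᵥ (A *ᵥ (u t)) := by
    intro t; simp only [hψdef, qf_apply, hudef]; exact dot_sandwich M A t x
  -- key pointwise inequality
  have hkey : ∀ t : ℝ,
      2 * (lam * c) * ψ t ≤ x ⬝ᵥ ((M * (exp (-(t • M)) * A * exp (-(t • Mᵀ)))
        + (exp (-(t • M)) * A * exp (-(t • Mᵀ))) * Mᵀ) *ᵥ x) := by
    intro t
    have hrw : M * (exp (-(t • M)) * A * exp (-(t • Mᵀ)))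
        + (exp (-(t • M)) * A * exp (-(t • Mᵀ))) * Mᵀ
        = exp (-(t • M)) * (M * A + A * Mᵀ) * exp (-(t • Mᵀ)) := by
      have h1 := commute_exp M t
      have h2 := commute_exp Mᵀ t
      calc M * (exp (-(t • M)) * A * exp (-(t • Mᵀ)))
            + (exp (-(t • M)) * A * exp (-(t • Mᵀ))) * Mᵀ
          = (M * exp (-(t • M))) * A * exp (-(t • Mᵀ))
            + exp (-(t • M)) * A * (Mᵀ * exp (-(t • Mᵀ))) := by
            rw [h2]; noncomm_ring
        _ = exp (-(t • M)) * (M * A + A * Mᵀ) * exp (-(t • Mᵀ)) := by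
            rw [h1]; noncomm_ring
    rw [hrw, dot_sandwich]
    set w : Fin n → ℝ := A *ᵥ (u t) with hwdef
    have hsum : (u t) ⬝ᵥ ((M * A + A * Mᵀ) *ᵥ (u t)) = 2 * (w ⬝ᵥ (γ' *ᵥ w)) := by
      have hMA : M * A = A * γ' * A := rfl
      have hAMt : A * Mᵀ = A * γ'ᵀ * A := by
        rw [hM, Matrix.transpose_mul, hAsymm.eq, Matrix.mul_assoc]
      rw [Matrix.add_mulVec, dotProduct_add, hMA, hAMt]
      have e1 : (u t) ⬝ᵥ ((A * γ' * A) *ᵥ (u t)) = w ⬝ᵥ (γ' *ᵥ w) := by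
        rw [← Matrix.mulVec_mulVec, ← Matrix.mulVec_mulVec, dot_symm_mulVec hAsymm, ← hwdef]
      have e2 : (u t) ⬝ᵥ ((A * γ'ᵀ * A) *ᵥ (u t)) = w ⬝ᵥ (γ' *ᵥ w) := by
        rw [← Matrix.mulVec_mulVec, ← Matrix.mulVec_mulVec, dot_symm_mulVec hAsymm, ← hwdef,
          dot_transpose_self]
      rw [e1, e2]; ring
    rw [hsum, hψu]
    -- scalar inequality
    have ht : c * ((u t) ⬝ᵥ (u t)) ≤ (u t) ⬝ᵥ w := hAlb (u t)
    have hcw : c * ((u t) ⬝ᵥ w) ≤ w ⬝ᵥ w := by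
      rcases le_or_gt ((u t) ⬝ᵥ w) 0 with h0 | h0
      · have ht0 : (u t) ⬝ᵥ w = 0 :=
          le_antisymm h0 (le_trans (mul_nonneg hc.le (dot_self_nonneg (u t))) ht)
        rw [ht0, mul_zero]; exact dot_self_nonneg w
      · have h1 : c * ((u t) ⬝ᵥ w) * ((u t) ⬝ᵥ w) ≤ (w ⬝ᵥ w) * ((u t) ⬝ᵥ w) := by
          nlinarith [mul_le_mul_of_nonneg_left (dot_cs (u t) w) hc.le,
            mul_le_mul_of_nonneg_right ht (dot_self_nonneg w)]
        exact le_of_mul_le_mul_right h1 h0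
    have hγw := hγ w
    have : (u t) ⬝ᵥ (A *ᵥ (u t)) = (u t) ⬝ᵥ w := rfl
    rw [this]
    nlinarith [hcw, hγw, hlam]
  -- derivative of ψ
  have hψ' : ∀ t : ℝ, HasDerivAt ψ
      (qf x (-(M * (exp (-(t • M)) * A * exp (-(t • Mᵀ)))
        + (exp (-(t • M)) * A * exp (-(t • Mᵀ))) * Mᵀ))) t := by
    intro t
    exact ((qf x).hasFDerivAt.comp_hasDerivAt t (hasDerivAt_G M A t))
  set φ : ℝ → ℝ := fun t => Real.exp (2 * (lam * c) * t) * ψ t with hφdef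
  have hφ' : ∀ t : ℝ, HasDerivAt φ
      (Real.exp (2 * (lam * c) * t) * (2 * (lam * c)) * ψ t
        + Real.exp (2 * (lam * c) * t) * (qf x (-(M * (exp (-(t • M)) * A * exp (-(t • Mᵀ)))
          + (exp (-(t • M)) * A * exp (-(t • Mᵀ))) * Mᵀ)))) t := by
    intro t
    have he : HasDerivAt (fun s : ℝ => Real.exp (2 * (lam * c) * s))
        (Real.exp (2 * (lam * c) * t) * (2 * (lam * c))) t := by
      simpa using ((hasDerivAt_id t).const_mul (2 * (lam * c))).exp
    exact he.mul (hψ' t)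
  have hanti : AntitoneOn φ (Set.Ici 0) := by
    apply antitoneOn_of_deriv_nonpos (convex_Ici 0)
    · have hdiff : Differentiable ℝ φ := fun t => (hφ' t).differentiableAt
      exact hdiff.continuous.continuousOn
    · intro t _; exact (hφ' t).differentiableAt.differentiableWithinAt
    · intro t _
      rw [(hφ' t).deriv]
      have hk := hkey t
      have hq : qf x (-(M * (exp (-(t • M)) * A * exp (-(t • Mᵀ)))
          + (exp (-(t • M)) * A * exp (-(t • Mᵀ))) * Mᵀ))
          = -(x ⬝ᵥ ((M * (exp (-(t • M)) * A * exp (-(t • Mᵀ)))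
          + (exp (-(t • M)) * A * exp (-(t • Mᵀ))) * Mᵀ) *ᵥ x)) := by
        rw [map_neg]; simp only [qf_apply]
      rw [hq]
      have hep := Real.exp_pos (2 * (lam * c) * t)
      nlinarith [hk, hep]
  have hφy : φ y ≤ φ 0 := hanti (Set.mem_Ici.mpr le_rfl) (Set.mem_Ici.mpr hy) hy
  have hφ0 : φ 0 = x ⬝ᵥ (A *ᵥ x) := by
    simp [hφdef, hψdef, NormedSpace.exp_zero]
  have hψy : ψ y ≤ Real.exp (-(2 * (lam * c)) * y) * (C * (x ⬝ᵥ x)) := by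
    rw [hφ0] at hφy
    have hep := Real.exp_pos (2 * (lam * c) * y)
    rw [show (-(2 * (lam * c)) * y) = -(2 * (lam * c) * y) by ring, Real.exp_neg,
      inv_mul_eq_div, le_div_iff₀ hep]
    have := hAub x
    have hφyy : Real.exp (2 * (lam * c) * y) * ψ y ≤ x ⬝ᵥ (A *ᵥ x) := hφy
    nlinarith [hφyy, this]
  have hlow : c * ((u y) ⬝ᵥ (u y)) ≤ ψ y := by rw [hψu]; exact hAlb (u y)
  have hfin : c * ((u y) ⬝ᵥ (u y)) ≤ c * ((C / c) * Real.exp (-(2 * (lam * c)) * y) * (x ⬝ᵥ x)) := by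
    have : c * ((C / c) * Real.exp (-(2 * (lam * c)) * y) * (x ⬝ᵥ x))
        = Real.exp (-(2 * (lam * c)) * y) * (C * (x ⬝ᵥ x)) := by
      field_simp
    rw [this]; exact le_trans hlow hψy
  exact le_of_mul_le_mul_left hfin hc

section NormBounds

lemma euc_norm_eq (v : EuclideanSpace ℝ (Fin n)) :
    ‖v‖ = Real.sqrt ((WithLp.equiv 2 _ v) ⬝ᵥ (WithLp.equiv 2 _ v)) := by
  rw [EuclideanSpace.norm_eq]
  congr 1
  apply Finset.sum_congr rfl
  intro i _
  rw [Real.norm_eq_abs, sq_abs, pow_two]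
  rfl

lemma l2_norm_transpose (P : Matrix (Fin n) (Fin n) ℝ) : ‖Pᵀ‖ = ‖P‖ := by
  rw [← Matrix.conjTranspose_eq_transpose_of_trivial, Matrix.l2_opNorm_conjTranspose]

open NormedSpace in
lemma norm_exp_le (c C lam : ℝ) (hc : 0 < c) (hcC : c ≤ C) (hlam : 0 < lam)
    (A γ' : Matrix (Fin n) (Fin n) ℝ) (hAsymm : A.IsSymm)
    (hAlb : ∀ x : Fin n → ℝ, c * (x ⬝ᵥ x) ≤ x ⬝ᵥ (A *ᵥ x))
    (hAub : ∀ x : Fin n → ℝ, x ⬝ᵥ (A *ᵥ x) ≤ C * (x ⬝ᵥ x))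
    (hγ : ∀ x : Fin n → ℝ, lam * (x ⬝ᵥ x) ≤ x ⬝ᵥ (γ' *ᵥ x))
    {y : ℝ} (hy : 0 ≤ y) :
    ‖exp (-(y • (A * γ')ᵀ))‖ ≤ Real.sqrt (C / c) * Real.exp (-(lam * c) * y) := by
  have hCc : (0:ℝ) ≤ C / c := div_nonneg (by linarith) hc.le
  rw [Matrix.l2_opNorm_def]
  apply ContinuousLinearMap.opNorm_le_bound _ (by positivity)
  intro z
  set x : Fin n → ℝ := WithLp.equiv 2 _ z with hx
  have happ : (Matrix.toEuclideanLin.trans LinearMap.toContinuousLinearMap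
        (exp (-(y • (A * γ')ᵀ)))) z
      = (WithLp.equiv 2 _).symm (exp (-(y • (A * γ')ᵀ)) *ᵥ x) := rfl
  rw [happ, euc_norm_eq, euc_norm_eq z, Equiv.apply_symm_apply]
  have hd := dot_decay c C lam hc hlam A γ' hAsymm hAlb hAub hγ x hy
  refine (Real.sqrt_le_sqrt hd).trans (le_of_eq ?_)
  rw [show (C / c) * Real.exp (-(2 * (lam * c)) * y) * (x ⬝ᵥ x)
      = ((C / c) * Real.exp (-(2 * (lam * c)) * y)) * (x ⬝ᵥ x) from by ring,
    Real.sqrt_mul (by positivity), Real.sqrt_mul hCc,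
    show (-(2 * (lam * c)) * y) = (-(lam * c) * y) + (-(lam * c) * y) from by ring,
    Real.exp_add, Real.sqrt_mul_self (Real.exp_nonneg _)]

open NormedSpace in
lemma norm_exp_le' (c C lam : ℝ) (hc : 0 < c) (hcC : c ≤ C) (hlam : 0 < lam)
    (A γ' : Matrix (Fin n) (Fin n) ℝ) (hAsymm : A.IsSymm)
    (hAlb : ∀ x : Fin n → ℝ, c * (x ⬝ᵥ x) ≤ x ⬝ᵥ (A *ᵥ x))
    (hAub : ∀ x : Fin n → ℝ, x ⬝ᵥ (A *ᵥ x) ≤ C * (x ⬝ᵥ x))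
    (hγ : ∀ x : Fin n → ℝ, lam * (x ⬝ᵥ x) ≤ x ⬝ᵥ (γ' *ᵥ x))
    {y : ℝ} (hy : 0 ≤ y) :
    ‖exp (-(y • (A * γ')))‖ ≤ Real.sqrt (C / c) * Real.exp (-(lam * c) * y) := by
  rw [← exp_neg_smul_transpose, l2_norm_transpose]
  exact norm_exp_le c C lam hc hcC hlam A γ' hAsymm hAlb hAub hγ hy

end NormBounds

open NormedSpace in
lemma norm_F_le (c C lam : ℝ) (hc : 0 < c) (hcC : c ≤ C) (hlam : 0 < lam)
    (A γ' : Matrix (Fin n) (Fin n) ℝ) (hAsymm : A.IsSymm)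
    (hAlb : ∀ x : Fin n → ℝ, c * (x ⬝ᵥ x) ≤ x ⬝ᵥ (A *ᵥ x))
    (hAub : ∀ x : Fin n → ℝ, x ⬝ᵥ (A *ᵥ x) ≤ C * (x ⬝ᵥ x))
    (hγ : ∀ x : Fin n → ℝ, lam * (x ⬝ᵥ x) ≤ x ⬝ᵥ (γ' *ᵥ x))
    (B : Matrix (Fin n) (Fin n) ℝ) {y : ℝ} (hy : 0 ≤ y) :
    ‖exp (-(y • (A * γ'))) * B * exp (-(y • (A * γ')ᵀ))‖
      ≤ (C / c) * ‖B‖ * Real.exp (-(2 * (lam * c)) * y) := by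
  have hCc : (0:ℝ) ≤ C / c := div_nonneg (by linarith) hc.le
  have h1 := norm_exp_le' c C lam hc hcC hlam A γ' hAsymm hAlb hAub hγ hy
  have h2 := norm_exp_le c C lam hc hcC hlam A γ' hAsymm hAlb hAub hγ hy
  calc ‖exp (-(y • (A * γ'))) * B * exp (-(y • (A * γ')ᵀ))‖
      ≤ ‖exp (-(y • (A * γ'))) * B‖ * ‖exp (-(y • (A * γ')ᵀ))‖ := norm_mul_le _ _
    _ ≤ (‖exp (-(y • (A * γ')))‖ * ‖B‖) * ‖exp (-(y • (A * γ')ᵀ))‖ :=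
        mul_le_mul_of_nonneg_right (norm_mul_le _ _) (norm_nonneg _)
    _ ≤ ((Real.sqrt (C / c) * Real.exp (-(lam * c) * y)) * ‖B‖)
          * (Real.sqrt (C / c) * Real.exp (-(lam * c) * y)) := by
        gcongr
    _ = (Real.sqrt (C / c) * Real.sqrt (C / c))
          * (Real.exp (-(lam * c) * y) * Real.exp (-(lam * c) * y)) * ‖B‖ := by ring
    _ = (C / c) * ‖B‖ * Real.exp (-(2 * (lam * c)) * y) := by
        rw [Real.mul_self_sqrt hCc, ← Real.exp_add,
          show (-(lam * c) * y) + (-(lam * c) * y) = (-(2 * (lam * c)) * y) from by ring]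
        ring

open NormedSpace in
lemma continuous_F (M B : Matrix (Fin n) (Fin n) ℝ) :
    Continuous (fun y : ℝ => exp (-(y • M)) * B * exp (-(y • Mᵀ))) := by
  letI : NormedAlgebra ℚ (Matrix (Fin n) (Fin n) ℝ) := NormedAlgebra.restrictScalars ℚ ℝ _
  have h1 : Continuous fun y : ℝ => exp (-(y • M)) :=
    exp_continuous.comp ((continuous_id.smul continuous_const).neg)
  have h2 : Continuous fun y : ℝ => exp (-(y • Mᵀ)) :=
    exp_continuous.comp ((continuous_id.smul continuous_const).neg)
  exact (h1.mul continuous_const).mul h2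

open NormedSpace in
lemma integrable_F (c C lam : ℝ) (hc : 0 < c) (hcC : c ≤ C) (hlam : 0 < lam)
    (A γ' : Matrix (Fin n) (Fin n) ℝ) (hAsymm : A.IsSymm)
    (hAlb : ∀ x : Fin n → ℝ, c * (x ⬝ᵥ x) ≤ x ⬝ᵥ (A *ᵥ x))
    (hAub : ∀ x : Fin n → ℝ, x ⬝ᵥ (A *ᵥ x) ≤ C * (x ⬝ᵥ x))
    (hγ : ∀ x : Fin n → ℝ, lam * (x ⬝ᵥ x) ≤ x ⬝ᵥ (γ' *ᵥ x))
    (B : Matrix (Fin n) (Fin n) ℝ) :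
    IntegrableOn (fun y : ℝ => exp (-(y • (A * γ'))) * B * exp (-(y • (A * γ')ᵀ)))
      (Set.Ici 0) := by
  have hg : IntegrableOn (fun y : ℝ => (C / c) * ‖B‖ * Real.exp (-(2 * (lam * c)) * y))
      (Set.Ici (0:ℝ)) := by
    rw [integrableOn_Ici_iff_integrableOn_Ioi]
    exact (exp_neg_integrableOn_Ioi 0 (by positivity)).const_mul _
  refine Integrable.mono' hg ((continuous_F (A * γ') B).aestronglyMeasurable) ?_
  rw [ae_restrict_iff' measurableSet_Ici]
  exact ae_of_all _ fun y hy =>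
    norm_F_le c C lam hc hcC hlam A γ' hAsymm hAlb hAub hγ B hy

open NormedSpace in
lemma tendsto_F (c C lam : ℝ) (hc : 0 < c) (hcC : c ≤ C) (hlam : 0 < lam)
    (A γ' : Matrix (Fin n) (Fin n) ℝ) (hAsymm : A.IsSymm)
    (hAlb : ∀ x : Fin n → ℝ, c * (x ⬝ᵥ x) ≤ x ⬝ᵥ (A *ᵥ x))
    (hAub : ∀ x : Fin n → ℝ, x ⬝ᵥ (A *ᵥ x) ≤ C * (x ⬝ᵥ x))
    (hγ : ∀ x : Fin n → ℝ, lam * (x ⬝ᵥ x) ≤ x ⬝ᵥ (γ' *ᵥ x))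
    (B : Matrix (Fin n) (Fin n) ℝ) :
    Filter.Tendsto (fun y : ℝ => exp (-(y • (A * γ'))) * B * exp (-(y • (A * γ')ᵀ)))
      Filter.atTop (nhds 0) := by
  refine squeeze_zero_norm'
    (a := fun y : ℝ => (C / c) * ‖B‖ * Real.exp (-(2 * (lam * c)) * y)) ?_ ?_
  · filter_upwards [Filter.eventually_ge_atTop (0:ℝ)] with y hy
    exact norm_F_le c C lam hc hcC hlam A γ' hAsymm hAlb hAub hγ B hy
  · have hb : (0:ℝ) < 2 * (lam * c) := by positivity
    have h1 : Filter.Tendsto (fun y : ℝ => Real.exp (-(2 * (lam * c)) * y))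
        Filter.atTop (nhds 0) := by
      simp only [neg_mul]
      exact Real.tendsto_exp_neg_atTop_nhds_zero.comp
        (Filter.Tendsto.const_mul_atTop hb Filter.tendsto_id)
    simpa using h1.const_mul ((C / c) * ‖B‖)

end LyapAux

end

/-- Let `M = A * γ̃` where `A` is real symmetric with eigenvalues in `[c, C]`
and the symmetric part of `γ̃` has eigenvalues at least `lam > 0`. For any real `n×n` matrix `D`,
the map `y ↦ exp(−yM) D exp(−yMᵀ)` is Bochner integrable on `[0, ∞)` and
`V = ∫₀^∞ exp(−yM) D exp(−yMᵀ) dy` is the unique solution of `M V + V Mᵀ = D`. -/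
theorem lyapunov_equation_unique_solution
    (n : ℕ) (hn : 1 ≤ n) (c C lam : ℝ) (hc : 0 < c) (hcC : c ≤ C) (hlam : 0 < lam)
    (A γ' D : Matrix (Fin n) (Fin n) ℝ)
    (hAsymm : A.IsSymm)
    (hAlb : ∀ x : Fin n → ℝ, c * (x ⬝ᵥ x) ≤ x ⬝ᵥ (A *ᵥ x))
    (hAub : ∀ x : Fin n → ℝ, x ⬝ᵥ (A *ᵥ x) ≤ C * (x ⬝ᵥ x))
    (hγ : ∀ x : Fin n → ℝ, lam * (x ⬝ᵥ x) ≤ x ⬝ᵥ (((2 : ℝ)⁻¹ • (γ' + γ'ᵀ)) *ᵥ x)) :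
    IntegrableOn
      (fun y : ℝ => NormedSpace.exp (-(y • (A * γ'))) * D *
        NormedSpace.exp (-(y • (A * γ')ᵀ))) (Set.Ici 0) ∧
    ∀ V : Matrix (Fin n) (Fin n) ℝ,
      (A * γ') * V + V * (A * γ')ᵀ = D ↔
        V = ∫ y in Set.Ici (0 : ℝ),
          NormedSpace.exp (-(y • (A * γ'))) * D * NormedSpace.exp (-(y • (A * γ')ᵀ)) := by
  have hγ2 : ∀ x : Fin n → ℝ, lam * (x ⬝ᵥ x) ≤ x ⬝ᵥ (γ' *ᵥ x) := by
    intro x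
    have h := hγ x
    have heq : x ⬝ᵥ (((2 : ℝ)⁻¹ • (γ' + γ'ᵀ)) *ᵥ x) = x ⬝ᵥ (γ' *ᵥ x) := by
      rw [Matrix.smul_mulVec, dotProduct_smul, Matrix.add_mulVec, dotProduct_add,
        LyapAux.dot_transpose_self]
      simp only [smul_eq_mul]
      ring
    rwa [heq] at h
  have hInt : ∀ B : Matrix (Fin n) (Fin n) ℝ, IntegrableOn
      (fun y : ℝ => NormedSpace.exp (-(y • (A * γ'))) * B *
        NormedSpace.exp (-(y • (A * γ')ᵀ))) (Set.Ici 0) :=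
    fun B => LyapAux.integrable_F c C lam hc hcC hlam A γ' hAsymm hAlb hAub hγ2 B
  refine ⟨hInt D, ?_⟩
  set M := A * γ' with hM
  set L : Matrix (Fin n) (Fin n) ℝ →ₗ[ℝ] Matrix (Fin n) (Fin n) ℝ :=
    { toFun := fun V => M * V + V * Mᵀ
      map_add' := fun V W => by noncomm_ring
      map_smul' := fun r V => by
        simp [Matrix.mul_smul, Matrix.smul_mul, smul_add] } with hL
  have hLV : ∀ B : Matrix (Fin n) (Fin n) ℝ,
      L (∫ y in Set.Ici (0:ℝ),
        NormedSpace.exp (-(y • M)) * B * NormedSpace.exp (-(y • Mᵀ))) = B := by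
    intro B
    set F : ℝ → Matrix (Fin n) (Fin n) ℝ :=
      fun y => NormedSpace.exp (-(y • M)) * B * NormedSpace.exp (-(y • Mᵀ)) with hF
    let Lc : Matrix (Fin n) (Fin n) ℝ →L[ℝ] Matrix (Fin n) (Fin n) ℝ :=
      LinearMap.toContinuousLinearMap L
    have hIntIoi : IntegrableOn F (Set.Ioi (0:ℝ)) := (hInt B).mono_set Set.Ioi_subset_Ici_self
    have hderiv : ∀ t ∈ Set.Ioi (0:ℝ), HasDerivAt F (-(Lc (F t))) t := by
      intro t _
      have h := LyapAux.hasDerivAt_G M B t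
      convert h using 1
      rfl
    have hcont : ContinuousWithinAt F (Set.Ici 0) 0 :=
      (LyapAux.continuous_F M B).continuousWithinAt
    have hint' : IntegrableOn (fun t => -(Lc (F t))) (Set.Ioi (0:ℝ)) :=
      (Lc.integrable_comp hIntIoi).neg
    have htend := LyapAux.tendsto_F c C lam hc hcC hlam A γ' hAsymm hAlb hAub hγ2 B
    have hFTC := integral_Ioi_of_hasDerivAt_of_tendsto hcont hderiv hint' htend
    rw [integral_neg] at hFTC
    have hF0 : F 0 = B := by simp [hF, NormedSpace.exp_zero]
    rw [hF0, zero_sub] at hFTC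
    have hX : ∫ t in Set.Ioi (0:ℝ), Lc (F t) = B := neg_injective hFTC
    have hcomm : ∫ t in Set.Ioi (0:ℝ), Lc (F t) = Lc (∫ t in Set.Ioi (0:ℝ), F t) :=
      ContinuousLinearMap.integral_comp_comm Lc hIntIoi
    calc L (∫ y in Set.Ici (0:ℝ), F y) = Lc (∫ y in Set.Ioi (0:ℝ), F y) := by
          rw [integral_Ici_eq_integral_Ioi]; rfl
      _ = B := by rw [← hcomm]; exact hX
  have hSurj : Function.Surjective L := fun B =>
    ⟨∫ y in Set.Ici (0:ℝ), NormedSpace.exp (-(y • M)) * B * NormedSpace.exp (-(y • Mᵀ)),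
      hLV B⟩
  have hInj : Function.Injective L := LinearMap.injective_iff_surjective.mpr hSurj
  intro V
  constructor
  · intro hV
    apply hInj
    rw [hLV D]
    exact hV
  · rintro rfl
    exact hLV D
end

section
/- Let n ≥ 1, let γ be a real symmetric positive definite n×n matrix, let S be a real antisymmetric n×n matrix (Sᵀ = −S), and set γ̃ = γ + S. Then the matrix-valued function y ↦ exp(−yγ̃) γ exp(−yγ̃ᵀ) is Bochner integrable on [0, ∞), and 2 ∫₀^∞ exp(−yγ̃) γ exp(−yγ̃ᵀ) dy = I, the n×n identity matrix. (This is the identity G_{kl}^{ab} Σ_{ab} = k_B T δ_{kl} underlying the simplification of the noise-induced drift when the fluctuation–dissipation relation Σ = 2 k_B T γ holds and A = I.) -/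
open Matrix MeasureTheory
open scoped Matrix.Norms.L2Operator RealInnerProductSpace

section Aux

/-- Decay bound for the exponential of a continuous linear operator whose symmetric part is
bounded below by `μ`. -/
lemma clm_exp_decay {E : Type*} [NormedAddCommGroup E] [InnerProductSpace ℝ E] [CompleteSpace E]
    (B : E →L[ℝ] E) (μ : ℝ) (h : ∀ x : E, μ * ‖x‖ ^ 2 ≤ ⟪B x, x⟫) {y : ℝ} (hy : 0 ≤ y) :
    ‖NormedSpace.exp (-(y • B))‖ ≤ Real.exp (-(μ * y)) := by
  refine ContinuousLinearMap.opNorm_le_bound _ (by positivity) fun x => ?_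
  set u : ℝ → E := fun t => NormedSpace.exp (-(t • B)) x with hu
  have hud : ∀ t, HasDerivAt u (-(B (u t))) t := by
    intro t
    have h1 := (hasDerivAt_exp_smul_const' (𝕂 := ℝ) (-B) t).clm_apply (hasDerivAt_const t x)
    simpa [u] using h1
  set g : ℝ → ℝ := fun t => ⟪u t, u t⟫ with hg
  have hgd : ∀ t, HasDerivAt g (-(2 * ⟪B (u t), u t⟫)) t := by
    intro t
    have h1 := (hud t).inner ℝ (hud t)
    refine h1.congr_deriv ?_
    simp [inner_neg_left, inner_neg_right, real_inner_comm (u t) (B (u t))]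
    ring
  set φ : ℝ → ℝ := fun t => Real.exp (2 * μ * t) * g t with hφ
  have hφd : ∀ t, HasDerivAt φ
      (Real.exp (2 * μ * t) * (2 * μ) * g t + Real.exp (2 * μ * t) * (-(2 * ⟪B (u t), u t⟫))) t := by
    intro t
    have h1 : HasDerivAt (fun s : ℝ => Real.exp (2 * μ * s)) (Real.exp (2 * μ * t) * (2 * μ)) t := by
      simpa using ((hasDerivAt_id t).const_mul (2 * μ)).exp
    exact h1.mul (hgd t)
  have hmono : Antitone φ := by
    refine antitone_of_deriv_nonpos (fun t => (hφd t).differentiableAt) fun t => ?_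
    rw [(hφd t).deriv]
    have hb := h (u t)
    have hgt : g t = ‖u t‖ ^ 2 := real_inner_self_eq_norm_sq (u t)
    have hexp : (0:ℝ) < Real.exp (2 * μ * t) := Real.exp_pos _
    have h2 := mul_le_mul_of_nonneg_left hb hexp.le
    rw [hgt]
    nlinarith [h2]
  have key : φ y ≤ φ 0 := hmono hy
  have hu0 : u 0 = x := by simp [u]
  have hφ0 : φ 0 = ‖x‖ ^ 2 := by simp [φ, g, hu0, real_inner_self_eq_norm_sq]
  have hφy : φ y = Real.exp (2 * μ * y) * ‖u y‖ ^ 2 := by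
    simp [φ, g, real_inner_self_eq_norm_sq]
  have key2 : (Real.exp (μ * y) * ‖u y‖) ^ 2 ≤ ‖x‖ ^ 2 := by
    have he : Real.exp (2 * μ * y) = Real.exp (μ * y) ^ 2 := by
      rw [← Real.exp_nat_mul]; ring_nf
    calc (Real.exp (μ * y) * ‖u y‖) ^ 2 = Real.exp (2 * μ * y) * ‖u y‖ ^ 2 := by
          rw [mul_pow, he]
      _ ≤ ‖x‖ ^ 2 := by rw [← hφy, ← hφ0]; exact key
  have key3 : Real.exp (μ * y) * ‖u y‖ ≤ ‖x‖ := by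
    have h1 : (0:ℝ) ≤ Real.exp (μ * y) * ‖u y‖ := by positivity
    nlinarith [key2, norm_nonneg x]
  calc ‖(NormedSpace.exp (-(y • B))) x‖ = ‖u y‖ := rfl
    _ = (Real.exp (μ * y))⁻¹ * (Real.exp (μ * y) * ‖u y‖) := by
        field_simp
    _ ≤ (Real.exp (μ * y))⁻¹ * ‖x‖ := by
        apply mul_le_mul_of_nonneg_left key3 (by positivity)
    _ = Real.exp (-(μ * y)) * ‖x‖ := by rw [Real.exp_neg]

/-- The Euclidean inner product of `M x` against `x` as a dot product. -/
lemma inner_toEuclideanCLM {n : ℕ} (M : Matrix (Fin n) (Fin n) ℝ)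
    (x : EuclideanSpace ℝ (Fin n)) :
    ⟪(toEuclideanCLM (𝕜 := ℝ) M) x, x⟫ =
      (WithLp.equiv 2 _ x) ⬝ᵥ M *ᵥ (WithLp.equiv 2 _ x) := by
  have h1 := ofLp_toEuclideanCLM (𝕜 := ℝ) M x
  have h2 : ∀ i, (toEuclideanCLM (𝕜 := ℝ) M x) i = (M *ᵥ (WithLp.equiv 2 _ x)) i := by
    intro i
    exact congrFun h1 i
  simp only [PiLp.inner_apply, RCLike.inner_apply, conj_trivial, dotProduct]
  refine Finset.sum_congr rfl fun i _ => ?_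
  rw [h2 i]
  rfl

/-- A positive definite matrix has a uniform lower bound on its quadratic form. -/
lemma posdef_exists_mu {n : ℕ} (hn : 1 ≤ n) (γ' : Matrix (Fin n) (Fin n) ℝ)
    (hγ : γ'.PosDef) :
    ∃ μ : ℝ, 0 < μ ∧ ∀ x : EuclideanSpace ℝ (Fin n),
      μ * ‖x‖ ^ 2 ≤ ⟪(toEuclideanCLM (𝕜 := ℝ) γ') x, x⟫ := by
  haveI : Nonempty (Fin n) := ⟨⟨0, hn⟩⟩
  set T := toEuclideanCLM (𝕜 := ℝ) γ' with hT
  have hpos : ∀ x : EuclideanSpace ℝ (Fin n), x ≠ 0 → 0 < ⟪T x, x⟫ := by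
    intro x hx
    rw [hT, _root_.inner_toEuclideanCLM]
    have hx' : (WithLp.equiv 2 _ x) ≠ 0 := by
      intro hc
      exact hx ((WithLp.equiv 2 _).injective (by simpa using hc))
    have := hγ.dotProduct_mulVec_pos hx'
    simpa using this
  haveI : Nontrivial (EuclideanSpace ℝ (Fin n)) := by
    refine ⟨0, EuclideanSpace.single ⟨0, hn⟩ (1:ℝ), fun hc => ?_⟩
    have := congrArg (fun v => ‖v‖) hc
    simp [EuclideanSpace.norm_single] at this
  have hsne : (Metric.sphere (0 : EuclideanSpace ℝ (Fin n)) 1).Nonempty :=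
    NormedSpace.sphere_nonempty.mpr zero_le_one
  have hsc : IsCompact (Metric.sphere (0 : EuclideanSpace ℝ (Fin n)) 1) :=
    isCompact_sphere _ _
  have hcont : Continuous fun x : EuclideanSpace ℝ (Fin n) => ⟪T x, x⟫ :=
    (T.continuous.inner continuous_id)
  obtain ⟨x₀, hx₀mem, hmin⟩ := hsc.exists_isMinOn hsne hcont.continuousOn
  have hx₀norm : ‖x₀‖ = 1 := by simpa using hx₀mem
  have hx₀ne : x₀ ≠ 0 := by
    intro hc; rw [hc] at hx₀norm; simp at hx₀norm
  refine ⟨⟪T x₀, x₀⟫, hpos x₀ hx₀ne, fun x => ?_⟩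
  rcases eq_or_ne x 0 with rfl | hx
  · simp
  · have hnx : (0:ℝ) < ‖x‖ := norm_pos_iff.mpr hx
    set v : EuclideanSpace ℝ (Fin n) := ‖x‖⁻¹ • x with hv
    have hvmem : v ∈ Metric.sphere (0 : EuclideanSpace ℝ (Fin n)) 1 := by
      simp [hv, norm_smul, abs_of_pos (inv_pos.mpr hnx), inv_mul_cancel₀ hnx.ne']
    have h1 : ⟪T x₀, x₀⟫ ≤ ⟪T v, v⟫ := hmin hvmem
    have h2 : ⟪T v, v⟫ = ‖x‖⁻¹ * ‖x‖⁻¹ * ⟪T x, x⟫ := by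
      simp [hv, inner_smul_left, inner_smul_right, _root_.map_smul]
      ring
    rw [h2] at h1
    have h3 := mul_le_mul_of_nonneg_left h1 (le_of_lt (mul_pos hnx hnx))
    calc ⟪T x₀, x₀⟫ * ‖x‖ ^ 2 = ‖x‖ * ‖x‖ * (⟪T x₀, x₀⟫) := by ring
      _ ≤ ‖x‖ * ‖x‖ * (‖x‖⁻¹ * ‖x‖⁻¹ * ⟪T x, x⟫) := h3
      _ = ⟪T x, x⟫ := by field_simp

/-- Norm decay for the matrix exponential. -/
lemma matrix_exp_decay {n : ℕ} (M : Matrix (Fin n) (Fin n) ℝ) (μ : ℝ)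
    (h : ∀ x : EuclideanSpace ℝ (Fin n),
      μ * ‖x‖ ^ 2 ≤ ⟪(toEuclideanCLM (𝕜 := ℝ) M) x, x⟫)
    {y : ℝ} (hy : 0 ≤ y) :
    ‖NormedSpace.exp (-(y • M))‖ ≤ Real.exp (-(μ * y)) := by
  have hiso : Continuous (toEuclideanCLM (n := Fin n) (𝕜 := ℝ)) := by
    have : Isometry (toEuclideanCLM (n := Fin n) (𝕜 := ℝ)) :=
      AddMonoidHomClass.isometry_of_norm _ fun a => (Matrix.cstar_norm_def a).symm
    exact this.continuous
  have hmap : toEuclideanCLM (n := Fin n) (𝕜 := ℝ) (NormedSpace.exp (-(y • M))) =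
      NormedSpace.exp (-(y • toEuclideanCLM (n := Fin n) (𝕜 := ℝ) M)) := by
    let +nondep : NormedAlgebra ℚ (Matrix (Fin n) (Fin n) ℝ) := .restrictScalars ℚ ℝ _
    rw [NormedSpace.map_exp _ hiso]
    congr 1
    simp
  rw [Matrix.cstar_norm_def, hmap]
  exact clm_exp_decay _ μ h hy

end Aux

/-- For `γ` real symmetric positive definite and `S` antisymmetric, with
`γ̃ = γ + S`, the map `y ↦ exp(−yγ̃) γ exp(−yγ̃ᵀ)` is Bochner integrable on `[0, ∞)` and
`2 ∫₀^∞ exp(−yγ̃) γ exp(−yγ̃ᵀ) dy = I`. -/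
theorem fluctuation_dissipation_identity
    (n : ℕ) (hn : 1 ≤ n) (γ' S : Matrix (Fin n) (Fin n) ℝ)
    (hγ : γ'.PosDef) (hS : Sᵀ = -S) :
    IntegrableOn
      (fun y : ℝ => NormedSpace.exp (-(y • (γ' + S))) * γ' *
        NormedSpace.exp (-(y • (γ' + S)ᵀ))) (Set.Ici 0) ∧
    (2 : ℝ) • (∫ y in Set.Ici (0 : ℝ),
        NormedSpace.exp (-(y • (γ' + S))) * γ' * NormedSpace.exp (-(y • (γ' + S)ᵀ))) =
      (1 : Matrix (Fin n) (Fin n) ℝ) := by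
  obtain ⟨μ, hμpos, hμ⟩ := posdef_exists_mu hn γ' hγ
  have hγt : γ'ᵀ = γ' := by
    have h1 := hγ.1
    rw [Matrix.IsHermitian] at h1
    ext i j
    have h2 := congrFun (congrFun h1 i) j
    simpa [Matrix.conjTranspose_apply] using h2
  set A := γ' + S with hA
  have hinner : ∀ (S' : Matrix (Fin n) (Fin n) ℝ), S'ᵀ = -S' →
      ∀ x : EuclideanSpace ℝ (Fin n),
      μ * ‖x‖ ^ 2 ≤ ⟪(toEuclideanCLM (𝕜 := ℝ) (γ' + S')) x, x⟫ := by
    intro S' hS' x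
    have h0 : ⟪(toEuclideanCLM (𝕜 := ℝ) S') x, x⟫ = 0 := by
      rw [_root_.inner_toEuclideanCLM]
      set v := WithLp.equiv 2 _ x with hv
      have h1 : v ⬝ᵥ S' *ᵥ v = -(v ⬝ᵥ S' *ᵥ v) := by
        conv_lhs => rw [Matrix.dotProduct_mulVec, ← Matrix.mulVec_transpose, hS',
          Matrix.neg_mulVec, neg_dotProduct, dotProduct_comm]
      linarith [h1]
    calc μ * ‖x‖ ^ 2 ≤ ⟪(toEuclideanCLM (𝕜 := ℝ) γ') x, x⟫ := hμ x
      _ = ⟪(toEuclideanCLM (𝕜 := ℝ) (γ' + S')) x, x⟫ := by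
          rw [map_add]
          simp [ContinuousLinearMap.add_apply, inner_add_left, h0]
  have hb1 : ∀ y : ℝ, 0 ≤ y → ‖NormedSpace.exp (-(y • A))‖ ≤ Real.exp (-(μ * y)) :=
    fun y hy => matrix_exp_decay A μ (hinner S hS) hy
  have hb2 : ∀ y : ℝ, 0 ≤ y → ‖NormedSpace.exp (-(y • Aᵀ))‖ ≤ Real.exp (-(μ * y)) := by
    intro y hy
    have h1 : Aᵀ = γ' + (-S) := by rw [hA, Matrix.transpose_add, hγt, hS]
    have h2 : (-S)ᵀ = -(-S) := by rw [Matrix.transpose_neg, hS, neg_neg]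
    rw [h1]
    exact matrix_exp_decay _ μ (hinner (-S) h2) hy
  set F : ℝ → Matrix (Fin n) (Fin n) ℝ :=
    fun y => NormedSpace.exp (-(y • A)) * γ' * NormedSpace.exp (-(y • Aᵀ)) with hF
  let +nondep : NormedAlgebra ℚ (Matrix (Fin n) (Fin n) ℝ) := .restrictScalars ℚ ℝ _
  have hc1 : Continuous fun y : ℝ => NormedSpace.exp (-(y • A)) :=
    NormedSpace.exp_continuous.comp ((continuous_id.smul continuous_const).neg)
  have hc2 : Continuous fun y : ℝ => NormedSpace.exp (-(y • Aᵀ)) :=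
    NormedSpace.exp_continuous.comp ((continuous_id.smul continuous_const).neg)
  have hFc : Continuous F := (hc1.mul continuous_const).mul hc2
  have hgint : IntegrableOn (fun y => ‖γ'‖ * Real.exp (-(2 * μ) * y)) (Set.Ici 0) := by
    have h1 := exp_neg_integrableOn_Ioi (a := 0) (b := 2 * μ) (by positivity)
    exact (Iff.mpr integrableOn_Ici_iff_integrableOn_Ioi h1).const_mul ‖γ'‖
  have hbound : ∀ y ∈ Set.Ici (0:ℝ), ‖F y‖ ≤ ‖γ'‖ * Real.exp (-(2 * μ) * y) := by
    intro y hy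
    have h1 := hb1 y hy
    have h2 := hb2 y hy
    calc ‖F y‖ ≤ ‖NormedSpace.exp (-(y • A)) * γ'‖ * ‖NormedSpace.exp (-(y • Aᵀ))‖ :=
          norm_mul_le _ _
      _ ≤ (‖NormedSpace.exp (-(y • A))‖ * ‖γ'‖) * ‖NormedSpace.exp (-(y • Aᵀ))‖ :=
          mul_le_mul_of_nonneg_right (norm_mul_le _ _) (norm_nonneg _)
      _ ≤ (Real.exp (-(μ * y)) * ‖γ'‖) * Real.exp (-(μ * y)) := by
          apply mul_le_mul (mul_le_mul_of_nonneg_right h1 (norm_nonneg γ')) h2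
            (norm_nonneg _) (by positivity)
      _ = ‖γ'‖ * Real.exp (-(2 * μ) * y) := by
          rw [show (-(2 * μ) * y) = (-(μ * y)) + (-(μ * y)) by ring, Real.exp_add]
          ring
  have hFint : IntegrableOn F (Set.Ici 0) := by
    refine Integrable.mono' hgint (hFc.aestronglyMeasurable.restrict) ?_
    rw [ae_restrict_iff' measurableSet_Ici]
    exact MeasureTheory.ae_of_all _ hbound
  have hd1 : ∀ t : ℝ, HasDerivAt (fun y : ℝ => NormedSpace.exp (-(y • A)))
      (NormedSpace.exp (-(t • A)) * (-A)) t := by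
    intro t
    have h1 := hasDerivAt_exp_smul_const (𝕂 := ℝ) (-A) t
    simpa [smul_neg] using h1
  have hd2 : ∀ t : ℝ, HasDerivAt (fun y : ℝ => NormedSpace.exp (-(y • Aᵀ)))
      ((-Aᵀ) * NormedSpace.exp (-(t • Aᵀ))) t := by
    intro t
    have h1 := hasDerivAt_exp_smul_const' (𝕂 := ℝ) (-Aᵀ) t
    simpa [smul_neg] using h1
  set H : ℝ → Matrix (Fin n) (Fin n) ℝ :=
    fun y => NormedSpace.exp (-(y • A)) * NormedSpace.exp (-(y • Aᵀ)) with hH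
  have hsum : A + Aᵀ = (2:ℝ) • γ' := by
    rw [hA, Matrix.transpose_add, hγt, hS, two_smul]
    abel
  have hfd : ∀ t : ℝ, HasDerivAt (fun y => (-(2:ℝ)⁻¹) • H y) (F t) t := by
    intro t
    have h1 := ((hd1 t).mul (hd2 t)).const_smul (-(2:ℝ)⁻¹)
    refine h1.congr_deriv ?_
    set e1 := NormedSpace.exp (-(t • A)) with he1
    set e2 := NormedSpace.exp (-(t • Aᵀ)) with he2
    have h2 : e1 * (-A) * e2 + e1 * ((-Aᵀ) * e2) = e1 * (-(A + Aᵀ)) * e2 := by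
      noncomm_ring
    have h3 : e1 * (-((2:ℝ) • γ')) * e2 = (-(2:ℝ)) • (e1 * γ' * e2) := by
      rw [mul_neg, neg_mul, mul_smul_comm, smul_mul_assoc, ← neg_smul]
    rw [h2, hsum, h3, smul_smul]
    norm_num [hF, he1, he2]
  have hHt : Filter.Tendsto H Filter.atTop (nhds 0) := by
    have hbnd : ∀ᶠ y in Filter.atTop, ‖H y‖ ≤ Real.exp (-(2 * μ * y)) := by
      filter_upwards [Filter.eventually_ge_atTop (0:ℝ)] with y hy
      calc ‖H y‖ ≤ ‖NormedSpace.exp (-(y • A))‖ * ‖NormedSpace.exp (-(y • Aᵀ))‖ :=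
            norm_mul_le _ _
        _ ≤ Real.exp (-(μ * y)) * Real.exp (-(μ * y)) :=
            mul_le_mul (hb1 y hy) (hb2 y hy) (norm_nonneg _) (by positivity)
        _ = Real.exp (-(2 * μ * y)) := by
            rw [← Real.exp_add]; ring_nf
    have htnd : Filter.Tendsto (fun y : ℝ => Real.exp (-(2 * μ * y))) Filter.atTop (nhds 0) := by
      have h1 : Filter.Tendsto (fun y : ℝ => 2 * μ * y) Filter.atTop Filter.atTop :=
        Filter.Tendsto.const_mul_atTop (by positivity) Filter.tendsto_id
      exact Real.tendsto_exp_neg_atTop_nhds_zero.comp h1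
    exact squeeze_zero_norm' hbnd htnd
  have hft : Filter.Tendsto (fun y => (-(2:ℝ)⁻¹) • H y) Filter.atTop (nhds 0) := by
    have h1 := hHt.const_smul (-(2:ℝ)⁻¹)
    simpa using h1
  have hIoi : IntegrableOn F (Set.Ioi 0) := hFint.mono_set Set.Ioi_subset_Ici_self
  have hkey := integral_Ioi_of_hasDerivAt_of_tendsto' (fun x _ => hfd x) hIoi hft
  have hH0 : H 0 = 1 := by
    simp [hH, NormedSpace.exp_zero]
  refine ⟨hFint, ?_⟩
  rw [MeasureTheory.integral_Ici_eq_integral_Ioi, hkey, hH0]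
  rw [zero_sub, neg_smul, neg_neg, smul_smul]
  norm_num
end

section
/- Let n ≥ 1, let g and γ be real symmetric positive definite n×n matrices, and set B = γ g⁻¹. Then the matrix-valued function y ↦ exp(−yB) γ exp(−yBᵀ) is Bochner integrable on [0, ∞), and 2 ∫₀^∞ exp(−yB) γ exp(−yBᵀ) dy = g. (This is the identity 2 G_{kl}^{ab}(t,q) γ_{ab}(t,q) = g_{kl}(t,q) underlying the simplification of the noise-induced drift for a particle on a Riemannian manifold under the fluctuation–dissipation relation Σ = 2 k_B T γ.) -/
open Matrix MeasureTheory
open scoped Matrix.Norms.L2Operator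

lemma aux_scalar_integrable {μ : ℝ} (hμ : 0 < μ) :
    IntegrableOn (fun y : ℝ => μ * Real.exp (-(2 * μ * y))) (Set.Ioi 0) := by
  have h2 : (0:ℝ) < 2 * μ := by linarith
  have := (exp_neg_integrableOn_Ioi 0 h2).const_mul μ
  simpa [mul_assoc, IntegrableOn] using this

lemma aux_scalar_integral {μ : ℝ} (hμ : 0 < μ) :
    ∫ y in Set.Ioi (0:ℝ), μ * Real.exp (-(2 * μ * y)) = 1 / 2 := by
  have hF : ∀ x ∈ Set.Ici (0:ℝ),
      HasDerivAt (fun y : ℝ => -(1/2) * Real.exp (-(2 * μ * y)))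
        (μ * Real.exp (-(2 * μ * x))) x := by
    intro x _
    have h1 : HasDerivAt (fun y : ℝ => -(2 * μ * y)) (-(2 * μ)) x := by
      simpa using ((hasDerivAt_id x).const_mul (2 * μ)).fun_neg
    have h2 := (h1.exp).const_mul (-(1/2 : ℝ))
    exact h2.congr_deriv (by ring)
  have htend : Filter.Tendsto (fun y : ℝ => -(1/2) * Real.exp (-(2 * μ * y)))
      Filter.atTop (nhds 0) := by
    have h2 : (0:ℝ) < 2 * μ := by linarith
    have hlin : Filter.Tendsto (fun y : ℝ => -(2 * μ * y)) Filter.atTop Filter.atBot := by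
      have := (Filter.tendsto_id (α := ℝ)).const_mul_atTop h2
      exact Filter.tendsto_neg_atBot_iff.mpr this
    have := (Real.tendsto_exp_atBot.comp hlin).const_mul (-(1/2 : ℝ))
    simpa using this
  have := MeasureTheory.integral_Ioi_of_hasDerivAt_of_tendsto'
    (f := fun y : ℝ => -(1/2) * Real.exp (-(2 * μ * y)))
    (f' := fun y : ℝ => μ * Real.exp (-(2 * μ * y))) hF (aux_scalar_integrable hμ) htend
  rw [this]
  norm_num

lemma aux_posdef_conj {n : ℕ} {A B : Matrix (Fin n) (Fin n) ℝ} (hA : A.PosDef)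
    (hB : IsUnit B.det) : (Bᴴ * A * B).PosDef := by
  refine Matrix.PosDef.of_dotProduct_mulVec_pos (Matrix.isHermitian_conjTranspose_mul_mul B hA.1) fun x hx => ?_
  have h : B *ᵥ x ≠ 0 := by
    intro h0
    apply hx
    have := congrArg (fun v => B⁻¹ *ᵥ v) h0
    simpa [Matrix.mulVec_mulVec, Matrix.nonsing_inv_mul _ hB] using this
  simpa only [Matrix.star_mulVec, Matrix.dotProduct_mulVec, Matrix.vecMul_vecMul]
    using hA.dotProduct_mulVec_pos h

lemma aux_diag_sum {n : ℕ} (c : Fin n → ℝ) :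
    Matrix.diagonal c = ∑ i, c i • Matrix.diagonal (Pi.single i (1:ℝ)) := by
  ext a b
  simp only [Matrix.sum_apply, Matrix.smul_apply, Matrix.diagonal_apply, Pi.single_apply,
    smul_eq_mul]
  by_cases h : a = b
  · subst h
    simp [Finset.sum_ite_eq]
  · simp [h]

/-- For `g` and `γ` real symmetric positive definite and `B = γ g⁻¹`, the map
`y ↦ exp(−yB) γ exp(−yBᵀ)` is Bochner integrable on `[0, ∞)` and
`2 ∫₀^∞ exp(−yB) γ exp(−yBᵀ) dy = g`. -/
theorem riemannian_fluctuation_dissipation_identity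
    (n : ℕ) (hn : 1 ≤ n) (g γ' : Matrix (Fin n) (Fin n) ℝ)
    (hg : g.PosDef) (hγ : γ'.PosDef) :
    IntegrableOn
      (fun y : ℝ => NormedSpace.exp (-(y • (γ' * g⁻¹))) * γ' *
        NormedSpace.exp (-(y • (γ' * g⁻¹)ᵀ))) (Set.Ici 0) ∧
    (2 : ℝ) • (∫ y in Set.Ici (0 : ℝ),
        NormedSpace.exp (-(y • (γ' * g⁻¹))) * γ' * NormedSpace.exp (-(y • (γ' * g⁻¹)ᵀ))) =
      g := by
  have hgps := hg.posSemidef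
  open scoped MatrixOrder in
  set s : Matrix (Fin n) (Fin n) ℝ := CFC.sqrt g with hs_def
  open scoped MatrixOrder in
  have hsPSD : s.PosSemidef := (CFC.sqrt_nonneg g).posSemidef
  open scoped MatrixOrder in
  have hss : s * s = g := CFC.sqrt_mul_sqrt_self g hgps.nonneg
  have hsH : sᴴ = s := hsPSD.isHermitian
  have hdet : IsUnit s.det := by
    have h2 : s.det * s.det = g.det := by rw [← Matrix.det_mul, hss]
    have hne : s.det ≠ 0 := by
      intro h
      rw [h, zero_mul] at h2
      exact hg.det_pos.ne' h2.symm
    exact hne.isUnit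
  have hinv1 : s * s⁻¹ = 1 := Matrix.mul_nonsing_inv s hdet
  have hinv2 : s⁻¹ * s = 1 := Matrix.nonsing_inv_mul s hdet
  have hginv : g⁻¹ = s⁻¹ * s⁻¹ := by rw [← hss, Matrix.mul_inv_rev]
  have hsinvH : (s⁻¹)ᴴ = s⁻¹ := by rw [Matrix.conjTranspose_nonsing_inv, hsH]
  set M : Matrix (Fin n) (Fin n) ℝ := s⁻¹ * γ' * s⁻¹ with hM_def
  have hM : M.PosDef := by
    have := aux_posdef_conj hγ (Matrix.isUnit_nonsing_inv_det s hdet)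
    rwa [hsinvH] at this
  have hHerm : M.IsHermitian := hM.isHermitian
  set U : Matrix (Fin n) (Fin n) ℝ := (hHerm.eigenvectorUnitary : Matrix (Fin n) (Fin n) ℝ)
    with hU_def
  set μ : Fin n → ℝ := hHerm.eigenvalues with hμ_def
  have hμpos : ∀ i, 0 < μ i := hM.eigenvalues_pos
  have hU1 : U * star U = 1 := Matrix.mem_unitaryGroup_iff.mp hHerm.eigenvectorUnitary.2
  have hU2 : star U * U = 1 := Matrix.mem_unitaryGroup_iff'.mp hHerm.eigenvectorUnitary.2
  have hUinv : U⁻¹ = star U := Matrix.inv_eq_right_inv hU1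
  have hUunit : IsUnit U := ⟨⟨U, star U, hU1, hU2⟩, rfl⟩
  have hspec : M = U * Matrix.diagonal μ * star U := by
    have := hHerm.spectral_theorem
    simpa [RCLike.ofReal_real_eq_id, Function.comp] using this
  set C : Fin n → Matrix (Fin n) (Fin n) ℝ :=
    fun i => s * U * Matrix.diagonal (Pi.single i (1:ℝ)) * (star U * s) with hC_def
  have hCsum : ∑ i, C i = g := by
    have h1 : (∑ i, Matrix.diagonal (Pi.single i (1:ℝ))) = (1 : Matrix (Fin n) (Fin n) ℝ) := by
      have := aux_diag_sum (fun _ : Fin n => (1:ℝ))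
      simpa using this.symm
    calc ∑ i, C i
        = s * U * (∑ i, Matrix.diagonal (Pi.single i (1:ℝ))) * (star U * s) := by
          simp [hC_def, Finset.mul_sum, Finset.sum_mul]
      _ = s * U * (star U * s) := by rw [h1, mul_one]
      _ = g := by rw [mul_assoc, ← mul_assoc U, hU1, one_mul, hss]
  have hBeq : γ' * g⁻¹ = s * M * s⁻¹ := by
    rw [hM_def, hginv]
    simp only [← mul_assoc]
    rw [hinv1, one_mul]
  have hγT : γ'ᵀ = γ' := by rw [← Matrix.conjTranspose_eq_transpose_of_trivial, hγ.1]
  have hgT : gᵀ = g := by rw [← Matrix.conjTranspose_eq_transpose_of_trivial, hg.1]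
  have hBT : (γ' * g⁻¹)ᵀ = s⁻¹ * M * s := by
    rw [Matrix.transpose_mul, Matrix.transpose_nonsing_inv, hgT, hγT, hM_def, hginv]
    simp only [← mul_assoc]
    rw [mul_assoc (s⁻¹ * s⁻¹ * γ') s⁻¹ s, hinv2, mul_one]
  have hpoint : ∀ y : ℝ,
      NormedSpace.exp (-(y • (γ' * g⁻¹))) * γ' * NormedSpace.exp (-(y • (γ' * g⁻¹)ᵀ))
        = ∑ i, (μ i * Real.exp (-(2 * μ i * y))) • C i := by
    intro y
    have hdiag : -(y • Matrix.diagonal μ) = Matrix.diagonal (fun i => -(y * μ i)) := by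
      ext a b
      by_cases h : a = b <;> simp [Matrix.diagonal_apply, h]
    have h1 : -(y • M) = U * Matrix.diagonal (fun i => -(y * μ i)) * U⁻¹ := by
      rw [hUinv, ← hdiag, hspec]
      simp [Matrix.mul_smul, Matrix.smul_mul, Matrix.mul_neg, Matrix.neg_mul]
    have hv : NormedSpace.exp (fun i => -(y * μ i)) = fun i => Real.exp (-(y * μ i)) := by
      rw [Pi.exp_def, Real.exp_eq_exp_ℝ]
    have hexpM : NormedSpace.exp (-(y • M))
        = U * Matrix.diagonal (fun i => Real.exp (-(y * μ i))) * star U := by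
      rw [h1, Matrix.exp_conj U _ hUunit, hUinv, Matrix.exp_diagonal, hv]
    have hexpB : NormedSpace.exp (-(y • (γ' * g⁻¹)))
        = s * NormedSpace.exp (-(y • M)) * s⁻¹ := by
      have h : -(y • (γ' * g⁻¹)) = s * (-(y • M)) * s⁻¹ := by
        rw [hBeq]
        simp [Matrix.mul_smul, Matrix.smul_mul, Matrix.mul_neg, Matrix.neg_mul]
      rw [h, Matrix.exp_conj s _ ((Matrix.isUnit_iff_isUnit_det s).mpr hdet)]
    have hexpBT : NormedSpace.exp (-(y • (γ' * g⁻¹)ᵀ))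
        = s⁻¹ * NormedSpace.exp (-(y • M)) * s := by
      have h : -(y • (γ' * g⁻¹)ᵀ) = s⁻¹ * (-(y • M)) * s := by
        rw [hBT]
        simp [Matrix.mul_smul, Matrix.smul_mul, Matrix.mul_neg, Matrix.neg_mul]
      rw [h, Matrix.exp_conj' s _ ((Matrix.isUnit_iff_isUnit_det s).mpr hdet)]
    have hmid : (star U * s⁻¹) * γ' * (s⁻¹ * U) = Matrix.diagonal μ := by
      have h : star U * M * U = Matrix.diagonal μ := by
        rw [hspec]
        simp only [← mul_assoc]
        rw [hU2, one_mul, mul_assoc, hU2, mul_one]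
      calc (star U * s⁻¹) * γ' * (s⁻¹ * U) = star U * M * U := by
            rw [hM_def]; simp only [mul_assoc]
        _ = Matrix.diagonal μ := h
    have hent : (fun i => Real.exp (-(y * μ i)) * μ i * Real.exp (-(y * μ i)))
        = fun i => μ i * Real.exp (-(2 * μ i * y)) := by
      funext i
      rw [mul_comm (Real.exp (-(y * μ i))) (μ i), mul_assoc, ← Real.exp_add]
      congr 1
      congr 1
      ring
    rw [hexpB, hexpBT, hexpM]
    calc s * (U * Matrix.diagonal (fun i => Real.exp (-(y * μ i))) * star U) * s⁻¹ * γ' *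
          (s⁻¹ * (U * Matrix.diagonal (fun i => Real.exp (-(y * μ i))) * star U) * s)
        = (s * U) * (Matrix.diagonal (fun i => Real.exp (-(y * μ i))) *
            ((star U * s⁻¹) * γ' * (s⁻¹ * U)) *
            Matrix.diagonal (fun i => Real.exp (-(y * μ i)))) * (star U * s) := by
          simp only [mul_assoc]
      _ = (s * U) * (Matrix.diagonal (fun i => Real.exp (-(y * μ i))) * Matrix.diagonal μ *
            Matrix.diagonal (fun i => Real.exp (-(y * μ i)))) * (star U * s) := by rw [hmid]
      _ = (s * U) * Matrix.diagonal
            (fun i => Real.exp (-(y * μ i)) * μ i * Real.exp (-(y * μ i))) * (star U * s) := by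
          rw [Matrix.diagonal_mul_diagonal, Matrix.diagonal_mul_diagonal]
      _ = (s * U) * Matrix.diagonal (fun i => μ i * Real.exp (-(2 * μ i * y))) * (star U * s) := by
          rw [hent]
      _ = ∑ i, (μ i * Real.exp (-(2 * μ i * y))) • C i := by
          rw [aux_diag_sum (fun i => μ i * Real.exp (-(2 * μ i * y)))]
          simp [hC_def, Finset.mul_sum, Finset.sum_mul, mul_smul_comm, smul_mul_assoc,
            mul_assoc]
  have hfun : (fun y : ℝ => NormedSpace.exp (-(y • (γ' * g⁻¹))) * γ' *
      NormedSpace.exp (-(y • (γ' * g⁻¹)ᵀ)))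
      = fun y => ∑ i, (μ i * Real.exp (-(2 * μ i * y))) • C i := funext hpoint
  constructor
  · rw [hfun, integrableOn_Ici_iff_integrableOn_Ioi]
    exact MeasureTheory.integrable_finset_sum _
      (fun i _ => (aux_scalar_integrable (hμpos i)).smul_const (C i))
  · rw [hfun, MeasureTheory.integral_Ici_eq_integral_Ioi]
    have hint : ∫ y in Set.Ioi (0:ℝ), ∑ i, (μ i * Real.exp (-(2 * μ i * y))) • C i
        = ∑ i, ((1:ℝ)/2) • C i := by
      rw [MeasureTheory.integral_finset_sum _
        (fun i _ => (aux_scalar_integrable (hμpos i)).smul_const (C i))]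
      refine Finset.sum_congr rfl fun i _ => ?_
      rw [integral_smul_const, aux_scalar_integral (hμpos i)]
    rw [hint, ← Finset.smul_sum, hCsum, smul_smul]
    norm_num
end

section
/- Fix an integer n ≥ 1 and constants m > 0, c₁ ≥ 0, c₂ ≥ 0, and define K : ℝⁿ → ℝ by K(z) = ‖z‖²/(2m) + c₁ (log(1 + c₂‖z‖²))². Then there exist constants c > 0 and M ≥ 0 such that ‖∇K(z)‖² + M ≥ c·K(z) for all z ∈ ℝⁿ. -/
open Real

private lemma grad_aux (n : ℕ) (m c₁ c₂ : ℝ) (hc₂ : 0 ≤ c₂)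
    (z : EuclideanSpace ℝ (Fin n)) :
    HasGradientAt (fun z : EuclideanSpace ℝ (Fin n) =>
      ‖z‖ ^ 2 / (2 * m) + c₁ * Real.log (1 + c₂ * ‖z‖ ^ 2) ^ 2)
      ((1 / m + 4 * c₁ * c₂ * Real.log (1 + c₂ * ‖z‖ ^ 2) / (1 + c₂ * ‖z‖ ^ 2)) • z) z := by
  have hpos : 0 < 1 + c₂ * ‖z‖ ^ 2 := by positivity
  set t := ‖z‖ ^ 2 with ht
  have hφ : HasDerivAt (fun t : ℝ => t / (2 * m) + c₁ * Real.log (1 + c₂ * t) ^ 2)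
      (1 / (2 * m) + c₁ * (2 * Real.log (1 + c₂ * t) * (c₂ / (1 + c₂ * t)))) t := by
    have h1 : HasDerivAt (fun t : ℝ => t / (2 * m)) (1 / (2 * m)) t := by
      simpa using (hasDerivAt_id t).div_const (2 * m)
    have h2 : HasDerivAt (fun t : ℝ => 1 + c₂ * t) c₂ t := by
      simpa using ((hasDerivAt_id t).const_mul c₂).const_add 1
    have h3 : HasDerivAt (fun t : ℝ => Real.log (1 + c₂ * t)) (c₂ / (1 + c₂ * t)) t := by
      simpa [div_eq_mul_inv, mul_comm] using h2.log (ne_of_gt hpos)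
    have h4 := (h3.pow 2).const_mul c₁
    exact (h1.add h4).congr_deriv (by rw [show (2:ℕ) - 1 = 1 from rfl, pow_one]; push_cast; ring)
  have hsq : HasFDerivAt (fun z : EuclideanSpace ℝ (Fin n) => ‖z‖ ^ 2)
      ((2 : ℝ) • (innerSL ℝ z)) z := by
    have h := (hasFDerivAt_id z).inner ℝ (hasFDerivAt_id z)
    have heq : (fderivInnerCLM ℝ (id z, id z)).comp
      ((ContinuousLinearMap.id ℝ (EuclideanSpace ℝ (Fin n))).prod
        (ContinuousLinearMap.id ℝ (EuclideanSpace ℝ (Fin n)))) = (2 : ℝ) • (innerSL ℝ z) := by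
      ext v
      simp only [ContinuousLinearMap.coe_comp', Function.comp_apply,
        ContinuousLinearMap.prod_apply, ContinuousLinearMap.coe_id', id_eq,
        fderivInnerCLM_apply, ContinuousLinearMap.smul_apply, innerSL_apply_apply, smul_eq_mul,
        two_mul, real_inner_comm z v]
    have h2 := h.congr_fderiv heq
    simpa only [id, real_inner_self_eq_norm_sq] using h2
  have hcomp := (hφ.hasFDerivAt.comp z hsq)
  rw [hasGradientAt_iff_hasFDerivAt]
  refine hcomp.congr_fderiv ?_
  ext v
  simp only [InnerProductSpace.toDual_apply_apply, real_inner_smul_left,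
    ContinuousLinearMap.coe_comp', Function.comp_apply, ContinuousLinearMap.smul_apply,
    innerSL_apply_apply, ContinuousLinearMap.toSpanSingleton_apply, ContinuousLinearMap.one_apply,
    smul_eq_mul]
  ring

/-- For `K(z) = ‖z‖²/(2m) + c₁ (log(1 + c₂‖z‖²))²` there exist `c > 0` and
`M ≥ 0` with `‖∇K(z)‖² + M ≥ c·K(z)` for all `z`. -/
theorem nuclear_kinetic_energy_coercivity
    (n : ℕ) (hn : 1 ≤ n) (m c₁ c₂ : ℝ) (hm : 0 < m) (hc₁ : 0 ≤ c₁) (hc₂ : 0 ≤ c₂)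
    (K : EuclideanSpace ℝ (Fin n) → ℝ)
    (hK : ∀ z, K z = ‖z‖ ^ 2 / (2 * m) + c₁ * Real.log (1 + c₂ * ‖z‖ ^ 2) ^ 2) :
    ∃ c > (0 : ℝ), ∃ M : ℝ, 0 ≤ M ∧ ∀ z, c * K z ≤ ‖gradient K z‖ ^ 2 + M := by
  set C : ℝ := 1 / (2 * m) + 4 * c₁ * c₂ with hC
  have hCpos : 0 < C := by positivity
  refine ⟨1 / (m ^ 2 * C), by positivity, 4 * c₁ * (1 / (m ^ 2 * C)), by positivity, fun z => ?_⟩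
  have hKfun : K = fun z : EuclideanSpace ℝ (Fin n) =>
      ‖z‖ ^ 2 / (2 * m) + c₁ * Real.log (1 + c₂ * ‖z‖ ^ 2) ^ 2 := funext hK
  set t := ‖z‖ ^ 2 with ht
  have htn : 0 ≤ t := by positivity
  have hpos : 0 < 1 + c₂ * t := by positivity
  set L := Real.log (1 + c₂ * t) with hL
  have hLn : 0 ≤ L := Real.log_nonneg (by nlinarith)
  set a : ℝ := 1 / m + 4 * c₁ * c₂ * L / (1 + c₂ * t) with ha
  have han : 1 / m ≤ a := by
    have : 0 ≤ 4 * c₁ * c₂ * L / (1 + c₂ * t) := by positivity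
    linarith
  have hgrad : gradient K z = a • z := by
    rw [hKfun]
    exact (grad_aux n m c₁ c₂ hc₂ z).gradient
  have hnormg : ‖gradient K z‖ ^ 2 = a ^ 2 * t := by
    rw [hgrad, norm_smul, mul_pow, ht, Real.norm_eq_abs, sq_abs]
  -- lower bound on the gradient norm
  have hg_lb : t / m ^ 2 ≤ ‖gradient K z‖ ^ 2 := by
    rw [hnormg]
    have h1 : (1 / m) ^ 2 ≤ a ^ 2 := by
      apply pow_le_pow_left₀ (by positivity) han
    have := mul_le_mul_of_nonneg_right h1 htn
    calc t / m ^ 2 = (1 / m) ^ 2 * t := by field_simp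
      _ ≤ a ^ 2 * t := this
  -- upper bound on L²
  have hLsq : L ^ 2 ≤ 4 * (1 + c₂ * t) := by
    have h1 : L ≤ (1 + c₂ * t) ^ ((1:ℝ)/2) / (1/2) :=
      Real.log_le_rpow_div (le_of_lt hpos) (by norm_num)
    have h2 : (1 + c₂ * t) ^ ((1:ℝ)/2) = Real.sqrt (1 + c₂ * t) :=
      (Real.sqrt_eq_rpow _).symm
    have h3 : L ≤ 2 * Real.sqrt (1 + c₂ * t) := by
      rw [h2] at h1; linarith
    have h4 : (2 * Real.sqrt (1 + c₂ * t)) ^ 2 = 4 * (1 + c₂ * t) := by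
      rw [mul_pow, Real.sq_sqrt (le_of_lt hpos)]; ring
    calc L ^ 2 ≤ (2 * Real.sqrt (1 + c₂ * t)) ^ 2 :=
          pow_le_pow_left₀ hLn h3 2
      _ = 4 * (1 + c₂ * t) := h4
  -- upper bound on K
  have hKub : K z ≤ t / (2 * m) + 4 * c₁ + 4 * c₁ * c₂ * t := by
    rw [hK z, ← ht, ← hL]
    have : c₁ * L ^ 2 ≤ c₁ * (4 * (1 + c₂ * t)) :=
      mul_le_mul_of_nonneg_left hLsq hc₁
    nlinarith
  have hcC : (1 / (m ^ 2 * C)) * C = 1 / m ^ 2 := by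
    field_simp
  have hcpos : 0 < 1 / (m ^ 2 * C) := by positivity
  have key : (1 / (m ^ 2 * C)) * K z ≤ (1 / (m ^ 2 * C)) * (C * t + 4 * c₁) := by
    apply mul_le_mul_of_nonneg_left _ (le_of_lt hcpos)
    calc K z ≤ t / (2 * m) + 4 * c₁ + 4 * c₁ * c₂ * t := hKub
      _ = C * t + 4 * c₁ := by rw [hC]; ring
  calc (1 / (m ^ 2 * C)) * K z ≤ (1 / (m ^ 2 * C)) * (C * t + 4 * c₁) := key
    _ = t / m ^ 2 + 4 * c₁ * (1 / (m ^ 2 * C)) := by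
        field_simp
    _ ≤ ‖gradient K z‖ ^ 2 + 4 * c₁ * (1 / (m ^ 2 * C)) := by linarith
end

section
/- Fix an integer n ≥ 1 and constants m > 0, c₁ ≥ 0, c₂ ≥ 0, and define K : ℝⁿ → ℝ by K(z) = ‖z‖²/(2m) + c₁ (log(1 + c₂‖z‖²))². Then for every δ > 0 there exists M > 0 such that ‖∇K(z)‖ ≤ M + δ·K(z) for all z ∈ ℝⁿ. -/
open Real

lemma nkegb_hasGradient (n : ℕ) (m c₁ c₂ : ℝ) (hm : 0 < m) (hc₂ : 0 ≤ c₂)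
    (z : EuclideanSpace ℝ (Fin n)) :
    HasGradientAt
      (fun z : EuclideanSpace ℝ (Fin n) =>
        ‖z‖ ^ 2 / (2 * m) + c₁ * Real.log (1 + c₂ * ‖z‖ ^ 2) ^ 2)
      ((1 / m + 4 * c₁ * c₂ * Real.log (1 + c₂ * ‖z‖ ^ 2) / (1 + c₂ * ‖z‖ ^ 2)) • z) z := by
  set t := ‖z‖ ^ 2 with ht
  have hpos : 0 < 1 + c₂ * t := by positivity
  have h1 : HasDerivAt (fun s : ℝ => s / (2 * m)) (1 / (2 * m)) t := by
    simpa using (hasDerivAt_id t).div_const (2 * m)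
  have h2 : HasDerivAt (fun s : ℝ => 1 + c₂ * s) c₂ t := by
    simpa using ((hasDerivAt_id t).const_mul c₂).const_add 1
  have h3 : HasDerivAt (fun s : ℝ => Real.log (1 + c₂ * s)) (c₂ / (1 + c₂ * t)) t :=
    h2.log hpos.ne'
  have h4 : HasDerivAt (fun s : ℝ => Real.log (1 + c₂ * s) ^ 2)
      (2 * Real.log (1 + c₂ * t) * (c₂ / (1 + c₂ * t))) t := by
    simpa using h3.fun_pow 2
  have hφ : HasDerivAt (fun s : ℝ => s / (2 * m) + c₁ * Real.log (1 + c₂ * s) ^ 2)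
      (1 / (2 * m) + c₁ * (2 * Real.log (1 + c₂ * t) * (c₂ / (1 + c₂ * t)))) t :=
    h1.add (h4.const_mul c₁)
  have hq : HasFDerivAt (fun z : EuclideanSpace ℝ (Fin n) => ‖z‖ ^ 2)
      (2 • (innerSL ℝ z)) z := by
    simpa using (hasFDerivAt_id z).norm_sq
  have hcomp := hφ.comp_hasFDerivAt z hq
  rw [hasGradientAt_iff_hasFDerivAt]
  refine hcomp.congr_fderiv ?_
  ext w
  simp only [InnerProductSpace.toDual_apply_apply, ContinuousLinearMap.smul_apply,
    ContinuousLinearMap.smul_apply, innerSL_apply_apply, real_inner_smul_left, smul_eq_mul]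
  have : (innerSL ℝ z) w = inner ℝ z w := rfl
  field_simp
  ring

/-- For `K(z) = ‖z‖²/(2m) + c₁ (log(1 + c₂‖z‖²))²`, for every `δ > 0` there
exists `M > 0` with `‖∇K(z)‖ ≤ M + δ·K(z)` for all `z`. -/
theorem nuclear_kinetic_energy_gradient_bound
    (n : ℕ) (hn : 1 ≤ n) (m c₁ c₂ : ℝ) (hm : 0 < m) (hc₁ : 0 ≤ c₁) (hc₂ : 0 ≤ c₂)
    (K : EuclideanSpace ℝ (Fin n) → ℝ)
    (hK : ∀ z, K z = ‖z‖ ^ 2 / (2 * m) + c₁ * Real.log (1 + c₂ * ‖z‖ ^ 2) ^ 2) :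
    ∀ δ > (0 : ℝ), ∃ M > (0 : ℝ), ∀ z, ‖gradient K z‖ ≤ M + δ * K z := by
  intro δ hδ
  set C : ℝ := 1 / m + 4 * c₁ * c₂ with hC
  have hCpos : 0 < C := by positivity
  set ε : ℝ := δ / (2 * m * C) with hε
  have hεpos : 0 < ε := by positivity
  refine ⟨C / (4 * ε) + 1, by positivity, fun z => ?_⟩
  have hK' : K = fun z : EuclideanSpace ℝ (Fin n) =>
      ‖z‖ ^ 2 / (2 * m) + c₁ * Real.log (1 + c₂ * ‖z‖ ^ 2) ^ 2 := funext hK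
  have hgrad := nkegb_hasGradient n m c₁ c₂ hm hc₂ z
  rw [← hK'] at hgrad
  rw [hgrad.gradient]
  set a : ℝ := 1 / m + 4 * c₁ * c₂ * Real.log (1 + c₂ * ‖z‖ ^ 2) / (1 + c₂ * ‖z‖ ^ 2) with ha
  have hpos : 0 < 1 + c₂ * ‖z‖ ^ 2 := by positivity
  have hlog_nonneg : 0 ≤ Real.log (1 + c₂ * ‖z‖ ^ 2) :=
    Real.log_nonneg (by nlinarith [sq_nonneg ‖z‖])
  have ha_nonneg : 0 ≤ a := by
    have : 0 ≤ 4 * c₁ * c₂ * Real.log (1 + c₂ * ‖z‖ ^ 2) / (1 + c₂ * ‖z‖ ^ 2) := by positivity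
    have h0 : 0 < 1 / m := by positivity
    rw [ha]; linarith
  have ha_le : a ≤ C := by
    have hlog_le : Real.log (1 + c₂ * ‖z‖ ^ 2) ≤ c₂ * ‖z‖ ^ 2 := by
      have := Real.log_le_sub_one_of_pos hpos
      linarith
    have hdivle : Real.log (1 + c₂ * ‖z‖ ^ 2) / (1 + c₂ * ‖z‖ ^ 2) ≤ 1 := by
      rw [div_le_one hpos]
      nlinarith [sq_nonneg ‖z‖]
    have h4 : (0:ℝ) ≤ 4 * c₁ * c₂ := by positivity
    rw [ha, hC, mul_div_assoc]
    nlinarith [mul_le_mul_of_nonneg_left hdivle h4]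
  have hnorm : ‖a • z‖ = a * ‖z‖ := by
    rw [norm_smul, Real.norm_eq_abs, abs_of_nonneg ha_nonneg]
  rw [hnorm]
  have hCz : a * ‖z‖ ≤ C * ‖z‖ :=
    mul_le_mul_of_nonneg_right ha_le (norm_nonneg z)
  have hamgm : ‖z‖ ≤ ε * ‖z‖ ^ 2 + 1 / (4 * ε) := by
    rw [show ε * ‖z‖ ^ 2 + 1 / (4 * ε) = (4 * ε ^ 2 * ‖z‖ ^ 2 + 1) / (4 * ε) by
      field_simp, le_div_iff₀ (by positivity)]
    nlinarith [sq_nonneg (2 * ε * ‖z‖ - 1)]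
  have hεC : C * ε = δ / (2 * m) := by
    rw [hε]
    field_simp
  have hKz : δ * K z ≥ δ / (2 * m) * ‖z‖ ^ 2 := by
    rw [hK z]
    have : 0 ≤ c₁ * Real.log (1 + c₂ * ‖z‖ ^ 2) ^ 2 := by positivity
    have h2 : δ * (‖z‖ ^ 2 / (2 * m)) = δ / (2 * m) * ‖z‖ ^ 2 := by ring
    nlinarith
  calc a * ‖z‖ ≤ C * ‖z‖ := hCz
    _ ≤ C * (ε * ‖z‖ ^ 2 + 1 / (4 * ε)) :=
        mul_le_mul_of_nonneg_left hamgm hCpos.le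
    _ = δ / (2 * m) * ‖z‖ ^ 2 + C / (4 * ε) := by rw [mul_add, ← mul_assoc, hεC]; ring
    _ ≤ (C / (4 * ε) + 1) + δ * K z := by linarith
end

section
/- Fix an integer n ≥ 1 and constants m > 0, c₁ ≥ 0, c₂ ≥ 0, and define K : ℝⁿ → ℝ by K(z) = ‖z‖²/(2m) + c₁ (log(1 + c₂‖z‖²))². Then K is twice continuously differentiable and its Hessian is uniformly bounded: there exists M > 0 such that (Σ_{i,j=1}^{n} (∂ᵢ∂ⱼK(z))²)^{1/2} ≤ M for all z ∈ ℝⁿ. -/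
lemma nk_hasDerivAt_f (m c₁ c₂ t : ℝ) (ht : 0 < 1 + c₂ * t) :
    HasDerivAt (fun s => s / (2 * m) + c₁ * Real.log (1 + c₂ * s) ^ 2)
      (1 / (2 * m) + 2 * c₁ * c₂ * Real.log (1 + c₂ * t) / (1 + c₂ * t)) t := by
  have h1 : HasDerivAt (fun s : ℝ => 1 + c₂ * s) c₂ t := by
    simpa using ((hasDerivAt_id t).const_mul c₂).const_add 1
  have h2 : HasDerivAt (fun s : ℝ => Real.log (1 + c₂ * s)) (c₂ / (1 + c₂ * t)) t :=
    h1.log ht.ne'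
  have h4 : HasDerivAt (fun s : ℝ => s / (2 * m)) (1 / (2 * m)) t := by
    simpa using (hasDerivAt_id t).div_const (2 * m)
  have := h4.add ((h2.pow 2).const_mul c₁)
  refine this.congr_deriv ?_
  norm_num
  ring

lemma nk_hasDerivAt_f' (m c₁ c₂ t : ℝ) (ht : 0 < 1 + c₂ * t) :
    HasDerivAt (fun s => 2 * (1 / (2 * m) + 2 * c₁ * c₂ * Real.log (1 + c₂ * s) / (1 + c₂ * s)))
      (2 * (2 * c₁ * c₂ ^ 2 * (1 - Real.log (1 + c₂ * t)) / (1 + c₂ * t) ^ 2)) t := by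
  have h1 : HasDerivAt (fun s : ℝ => 1 + c₂ * s) c₂ t := by
    simpa using ((hasDerivAt_id t).const_mul c₂).const_add 1
  have h2 : HasDerivAt (fun s : ℝ => Real.log (1 + c₂ * s)) (c₂ / (1 + c₂ * t)) t :=
    h1.log ht.ne'
  have h3 := (((h2.const_mul (2 * c₁ * c₂)).div h1 ht.ne').const_add (1 / (2 * m))).const_mul 2
  refine h3.congr_deriv ?_
  field_simp

lemma nk_bound1 (m c₁ c₂ t : ℝ) (hm : 0 < m) (hc₁ : 0 ≤ c₁) (hc₂ : 0 ≤ c₂) (htt : 0 ≤ t) :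
    |1 / (2 * m) + 2 * c₁ * c₂ * Real.log (1 + c₂ * t) / (1 + c₂ * t)|
      ≤ 1 / (2 * m) + 2 * c₁ * c₂ := by
  have hu : 0 ≤ c₂ * t := mul_nonneg hc₂ htt
  have h1u : (0:ℝ) < 1 + c₂ * t := by linarith
  have hL0 : 0 ≤ Real.log (1 + c₂ * t) := Real.log_nonneg (by linarith)
  have hLu : Real.log (1 + c₂ * t) ≤ c₂ * t := by
    have := Real.log_le_sub_one_of_pos h1u
    linarith
  have hterm0 : 0 ≤ 2 * c₁ * c₂ * Real.log (1 + c₂ * t) / (1 + c₂ * t) := by positivity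
  have hterm1 : 2 * c₁ * c₂ * Real.log (1 + c₂ * t) / (1 + c₂ * t) ≤ 2 * c₁ * c₂ := by
    rw [div_le_iff₀ h1u]
    nlinarith [mul_nonneg hc₁ hc₂]
  rw [abs_of_nonneg (by positivity)]
  linarith

lemma nk_bound2 (c₁ c₂ t : ℝ) (hc₁ : 0 ≤ c₁) (hc₂ : 0 ≤ c₂) (htt : 0 ≤ t) :
    |2 * c₁ * c₂ ^ 2 * (1 - Real.log (1 + c₂ * t)) / (1 + c₂ * t) ^ 2| * t ≤ 2 * c₁ * c₂ := by
  have hu : 0 ≤ c₂ * t := mul_nonneg hc₂ htt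
  have h1u : (0:ℝ) < 1 + c₂ * t := by linarith
  have hL0 : 0 ≤ Real.log (1 + c₂ * t) := Real.log_nonneg (by linarith)
  have hLu : Real.log (1 + c₂ * t) ≤ c₂ * t := by
    have := Real.log_le_sub_one_of_pos h1u
    linarith
  have hA : |1 - Real.log (1 + c₂ * t)| ≤ 1 + c₂ * t :=
    abs_le.2 ⟨by linarith, by linarith⟩
  have hA0 : 0 ≤ |1 - Real.log (1 + c₂ * t)| := abs_nonneg _
  rw [abs_div, abs_of_nonneg (by positivity : (0:ℝ) ≤ (1 + c₂ * t) ^ 2), abs_mul,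
    abs_of_nonneg (by positivity : (0:ℝ) ≤ 2 * c₁ * c₂ ^ 2), div_mul_eq_mul_div,
    div_le_iff₀ (by positivity)]
  have key : (c₂ * t) * |1 - Real.log (1 + c₂ * t)| ≤ (1 + c₂ * t) * (1 + c₂ * t) :=
    mul_le_mul (by linarith) hA hA0 (by linarith)
  nlinarith [mul_le_mul_of_nonneg_left key (by positivity : (0:ℝ) ≤ 2 * c₁ * c₂)]

/-- `K(z) = ‖z‖²/(2m) + c₁ (log(1 + c₂‖z‖²))²` is `C²` and its Hessian is
uniformly bounded: there is `M > 0` with `(Σᵢⱼ (∂ᵢ∂ⱼK(z))²)^{1/2} ≤ M` for all `z`. -/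
theorem nuclear_kinetic_energy_hessian_bound
    (n : ℕ) (hn : 1 ≤ n) (m c₁ c₂ : ℝ) (hm : 0 < m) (hc₁ : 0 ≤ c₁) (hc₂ : 0 ≤ c₂)
    (K : EuclideanSpace ℝ (Fin n) → ℝ)
    (hK : ∀ z, K z = ‖z‖ ^ 2 / (2 * m) + c₁ * Real.log (1 + c₂ * ‖z‖ ^ 2) ^ 2) :
    ContDiff ℝ 2 K ∧
      ∃ M > (0 : ℝ), ∀ z : EuclideanSpace ℝ (Fin n),
        Real.sqrt (∑ i : Fin n, ∑ j : Fin n,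
          (fderiv ℝ (fun y => fderiv ℝ K y (EuclideanSpace.single j (1 : ℝ))) z
            (EuclideanSpace.single i (1 : ℝ))) ^ 2) ≤ M := by
  have hKe : K = fun z => ‖z‖ ^ 2 / (2 * m) + c₁ * Real.log (1 + c₂ * ‖z‖ ^ 2) ^ 2 :=
    funext hK
  subst hKe
  have hpos : ∀ z : EuclideanSpace ℝ (Fin n), (0:ℝ) < 1 + c₂ * ‖z‖ ^ 2 := fun z => by positivity
  -- first derivative
  have hfd : ∀ (y : EuclideanSpace ℝ (Fin n)) (j : Fin n),
      fderiv ℝ (fun z : EuclideanSpace ℝ (Fin n) =>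
          ‖z‖ ^ 2 / (2 * m) + c₁ * Real.log (1 + c₂ * ‖z‖ ^ 2) ^ 2) y
        (EuclideanSpace.single j (1 : ℝ)) =
      2 * (1 / (2 * m) + 2 * c₁ * c₂ * Real.log (1 + c₂ * ‖y‖ ^ 2) / (1 + c₂ * ‖y‖ ^ 2)) * y j := by
    intro y j
    have hq : HasFDerivAt (fun z : EuclideanSpace ℝ (Fin n) => ‖z‖ ^ 2)
        (2 • (innerSL ℝ y)) y := (hasStrictFDerivAt_norm_sq y).hasFDerivAt
    have hK1 : HasFDerivAt (fun z : EuclideanSpace ℝ (Fin n) =>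
        ‖z‖ ^ 2 / (2 * m) + c₁ * Real.log (1 + c₂ * ‖z‖ ^ 2) ^ 2)
        ((1 / (2 * m) + 2 * c₁ * c₂ * Real.log (1 + c₂ * ‖y‖ ^ 2) / (1 + c₂ * ‖y‖ ^ 2)) •
          (2 • (innerSL ℝ y))) y :=
      by have := (nk_hasDerivAt_f m c₁ c₂ _ (hpos y)).comp_hasFDerivAt y hq; exact this
    rw [hK1.fderiv]
    simp [EuclideanSpace.inner_single_right, real_inner_comm]
    ring
  -- second derivative entries
  have hentry : ∀ (z : EuclideanSpace ℝ (Fin n)) (i j : Fin n),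
      fderiv ℝ (fun y : EuclideanSpace ℝ (Fin n) =>
          fderiv ℝ (fun z : EuclideanSpace ℝ (Fin n) =>
            ‖z‖ ^ 2 / (2 * m) + c₁ * Real.log (1 + c₂ * ‖z‖ ^ 2) ^ 2) y
            (EuclideanSpace.single j (1 : ℝ))) z
        (EuclideanSpace.single i (1 : ℝ)) =
      4 * (2 * c₁ * c₂ ^ 2 * (1 - Real.log (1 + c₂ * ‖z‖ ^ 2)) / (1 + c₂ * ‖z‖ ^ 2) ^ 2)
          * z i * z j
        + 2 * (1 / (2 * m) + 2 * c₁ * c₂ * Real.log (1 + c₂ * ‖z‖ ^ 2) / (1 + c₂ * ‖z‖ ^ 2))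
          * (if j = i then (1:ℝ) else 0) := by
    intro z i j
    have hfun : (fun y : EuclideanSpace ℝ (Fin n) =>
        fderiv ℝ (fun z : EuclideanSpace ℝ (Fin n) =>
          ‖z‖ ^ 2 / (2 * m) + c₁ * Real.log (1 + c₂ * ‖z‖ ^ 2) ^ 2) y
          (EuclideanSpace.single j (1 : ℝ))) =
        fun y : EuclideanSpace ℝ (Fin n) =>
          2 * (1 / (2 * m) + 2 * c₁ * c₂ * Real.log (1 + c₂ * ‖y‖ ^ 2) / (1 + c₂ * ‖y‖ ^ 2))
            * y j :=
      funext fun y => hfd y j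
    rw [hfun]
    have hq : HasFDerivAt (fun y : EuclideanSpace ℝ (Fin n) => ‖y‖ ^ 2)
        (2 • (innerSL ℝ z)) z := (hasStrictFDerivAt_norm_sq z).hasFDerivAt
    have hu : HasFDerivAt (fun y : EuclideanSpace ℝ (Fin n) =>
        2 * (1 / (2 * m) + 2 * c₁ * c₂ * Real.log (1 + c₂ * ‖y‖ ^ 2) / (1 + c₂ * ‖y‖ ^ 2)))
        ((2 * (2 * c₁ * c₂ ^ 2 * (1 - Real.log (1 + c₂ * ‖z‖ ^ 2)) / (1 + c₂ * ‖z‖ ^ 2) ^ 2)) •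
          (2 • (innerSL ℝ z))) z :=
      by have := (nk_hasDerivAt_f' m c₁ c₂ _ (hpos z)).comp_hasFDerivAt z hq; exact this
    have hv : HasFDerivAt (fun y : EuclideanSpace ℝ (Fin n) => y j)
        (EuclideanSpace.proj (𝕜 := ℝ) j) z := (EuclideanSpace.proj (𝕜 := ℝ) j).hasFDerivAt
    have hG : HasFDerivAt (fun y : EuclideanSpace ℝ (Fin n) =>
      2 * (1 / (2 * m) + 2 * c₁ * c₂ * Real.log (1 + c₂ * ‖y‖ ^ 2) / (1 + c₂ * ‖y‖ ^ 2)) * y j) _ z :=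
      hu.mul hv
    rw [hG.fderiv]
    simp [EuclideanSpace.inner_single_right, EuclideanSpace.single_apply, real_inner_comm]
    ring
  constructor
  · -- C²
    rw [contDiff_iff_contDiffAt]
    intro z
    have hq : ContDiffAt ℝ 2 (fun y : EuclideanSpace ℝ (Fin n) => ‖y‖ ^ 2) z :=
      (contDiff_norm_sq ℝ).contDiffAt
    have hinner : ContDiffAt ℝ 2 (fun s : ℝ => 1 + c₂ * s) (‖z‖ ^ 2) :=
      contDiffAt_const.add (contDiffAt_const.mul contDiffAt_id)
    have hlog : ContDiffAt ℝ 2 (fun s : ℝ => Real.log (1 + c₂ * s)) (‖z‖ ^ 2) :=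
      hinner.log (hpos z).ne'
    have hf : ContDiffAt ℝ 2
        (fun s : ℝ => s / (2 * m) + c₁ * Real.log (1 + c₂ * s) ^ 2) (‖z‖ ^ 2) :=
      (contDiffAt_id.div_const _).add (contDiffAt_const.mul (hlog.pow 2))
    exact hf.comp z hq
  · -- uniform bound
    set C : ℝ := 8 * c₁ * c₂ + (1 / m + 4 * c₁ * c₂) with hC
    have hc12 : 0 ≤ c₁ * c₂ := mul_nonneg hc₁ hc₂
    have hCpos : 0 < C := by
      rw [hC]
      have : 0 < 1 / m := by positivity
      nlinarith
    refine ⟨(n : ℝ) * C, by positivity, fun z => ?_⟩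
    have hcoord : ∀ i : Fin n, |z i| ≤ ‖z‖ := by
      intro i
      have := abs_real_inner_le_norm z (EuclideanSpace.single i (1:ℝ))
      simpa [EuclideanSpace.inner_single_right] using this
    have hentryBound : ∀ i j : Fin n,
        |fderiv ℝ (fun y : EuclideanSpace ℝ (Fin n) =>
          fderiv ℝ (fun z : EuclideanSpace ℝ (Fin n) =>
            ‖z‖ ^ 2 / (2 * m) + c₁ * Real.log (1 + c₂ * ‖z‖ ^ 2) ^ 2) y
            (EuclideanSpace.single j (1 : ℝ))) z
          (EuclideanSpace.single i (1 : ℝ))| ≤ C := by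
      intro i j
      rw [hentry z i j]
      have h1 := nk_bound1 m c₁ c₂ (‖z‖ ^ 2) hm hc₁ hc₂ (by positivity)
      have h2 := nk_bound2 c₁ c₂ (‖z‖ ^ 2) hc₁ hc₂ (by positivity)
      have hzz : |z i| * |z j| ≤ ‖z‖ ^ 2 := by
        have := mul_le_mul (hcoord i) (hcoord j) (abs_nonneg _) (norm_nonneg z)
        nlinarith
      calc |4 * (2 * c₁ * c₂ ^ 2 * (1 - Real.log (1 + c₂ * ‖z‖ ^ 2)) / (1 + c₂ * ‖z‖ ^ 2) ^ 2)
              * z i * z j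
            + 2 * (1 / (2 * m) + 2 * c₁ * c₂ * Real.log (1 + c₂ * ‖z‖ ^ 2) / (1 + c₂ * ‖z‖ ^ 2))
              * (if j = i then (1:ℝ) else 0)|
          ≤ |4 * (2 * c₁ * c₂ ^ 2 * (1 - Real.log (1 + c₂ * ‖z‖ ^ 2)) / (1 + c₂ * ‖z‖ ^ 2) ^ 2)
              * z i * z j|
            + |2 * (1 / (2 * m) + 2 * c₁ * c₂ * Real.log (1 + c₂ * ‖z‖ ^ 2) / (1 + c₂ * ‖z‖ ^ 2))
              * (if j = i then (1:ℝ) else 0)| := abs_add_le _ _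
        _ ≤ C := by
            have e1 : |4 * (2 * c₁ * c₂ ^ 2 * (1 - Real.log (1 + c₂ * ‖z‖ ^ 2)) /
                (1 + c₂ * ‖z‖ ^ 2) ^ 2) * z i * z j| ≤ 8 * c₁ * c₂ := by
              rw [abs_mul, abs_mul, abs_mul, abs_of_nonneg (by norm_num : (0:ℝ) ≤ 4)]
              calc 4 * |2 * c₁ * c₂ ^ 2 * (1 - Real.log (1 + c₂ * ‖z‖ ^ 2)) /
                      (1 + c₂ * ‖z‖ ^ 2) ^ 2| * |z i| * |z j|
                  ≤ 4 * (|2 * c₁ * c₂ ^ 2 * (1 - Real.log (1 + c₂ * ‖z‖ ^ 2)) /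
                      (1 + c₂ * ‖z‖ ^ 2) ^ 2| * ‖z‖ ^ 2) := by
                    nlinarith [abs_nonneg (2 * c₁ * c₂ ^ 2 * (1 - Real.log (1 + c₂ * ‖z‖ ^ 2)) /
                      (1 + c₂ * ‖z‖ ^ 2) ^ 2), abs_nonneg (z i), abs_nonneg (z j)]
                _ ≤ 4 * (2 * c₁ * c₂) := by nlinarith
                _ = 8 * c₁ * c₂ := by ring
            have e2 : |2 * (1 / (2 * m) + 2 * c₁ * c₂ * Real.log (1 + c₂ * ‖z‖ ^ 2) /
                (1 + c₂ * ‖z‖ ^ 2)) * (if j = i then (1:ℝ) else 0)| ≤ 1 / m + 4 * c₁ * c₂ := by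
              rw [abs_mul, abs_mul, abs_of_nonneg (by norm_num : (0:ℝ) ≤ 2)]
              have hd : |(if j = i then (1:ℝ) else 0)| ≤ 1 := by
                split <;> simp
              have := nk_bound1 m c₁ c₂ (‖z‖ ^ 2) hm hc₁ hc₂ (by positivity)
              have h5 := mul_le_mul_of_nonneg_left hd (abs_nonneg
                (1 / (2 * m) + 2 * c₁ * c₂ * Real.log (1 + c₂ * ‖z‖ ^ 2) / (1 + c₂ * ‖z‖ ^ 2)))
              have h6 := mul_le_mul_of_nonneg_right this (abs_nonneg
                (if j = i then (1:ℝ) else 0))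
              have h7 : 2 * (1 / (2 * m)) = 1 / m := by field_simp
              nlinarith [abs_nonneg (if j = i then (1:ℝ) else 0)]
            linarith
    have hsum : (∑ i : Fin n, ∑ j : Fin n,
        (fderiv ℝ (fun y : EuclideanSpace ℝ (Fin n) =>
          fderiv ℝ (fun z : EuclideanSpace ℝ (Fin n) =>
            ‖z‖ ^ 2 / (2 * m) + c₁ * Real.log (1 + c₂ * ‖z‖ ^ 2) ^ 2) y
            (EuclideanSpace.single j (1 : ℝ))) z
          (EuclideanSpace.single i (1 : ℝ))) ^ 2) ≤ ((n : ℝ) * C) ^ 2 := by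
      calc (∑ i : Fin n, ∑ j : Fin n, _ ^ 2)
          ≤ ∑ _i : Fin n, ∑ _j : Fin n, C ^ 2 := by
            refine Finset.sum_le_sum fun i _ => Finset.sum_le_sum fun j _ => ?_
            rw [← sq_abs]
            exact pow_le_pow_left₀ (abs_nonneg _) (hentryBound i j) 2
        _ = (n : ℝ) * ((n : ℝ) * C ^ 2) := by
            simp [Finset.sum_const, Finset.card_univ, mul_assoc]
        _ ≤ ((n : ℝ) * C) ^ 2 := by nlinarith [(show (1:ℝ) ≤ (n:ℝ) by exact_mod_cast hn), hCpos]
    calc Real.sqrt _ ≤ Real.sqrt (((n : ℝ) * C) ^ 2) := Real.sqrt_le_sqrt hsum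
      _ = (n : ℝ) * C := Real.sqrt_sq (by positivity)
end

section
/- Fix an integer n ≥ 1, integers 1 ≤ k₁ ≤ k₂, and constants 0 < c̃ ≤ C̃. Let A be a real symmetric n×n matrix with all eigenvalues in [c̃, C̃], and let d_{k₁}, …, d_{k₂} be real numbers with 0 ≤ d_l ≤ C̃ for all l, d_{k₁} ≥ c̃, and d_{k₂} ≥ c̃. Define K : ℝⁿ → ℝ by K(z) = Σ_{l=k₁}^{k₂} d_l (zᵀAz)^l. Then there exist constants c > 0 and M ≥ 0 such that ‖∇K(z)‖² + M ≥ c·K(z) for all z ∈ ℝⁿ. -/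
open Matrix RealInnerProductSpace

noncomputable def Bmap {n : ℕ} (A : Matrix (Fin n) (Fin n) ℝ) :
    EuclideanSpace ℝ (Fin n) →L[ℝ] EuclideanSpace ℝ (Fin n) :=
  LinearMap.toContinuousLinearMap
    (Matrix.toEuclideanLin A : EuclideanSpace ℝ (Fin n) →ₗ[ℝ] EuclideanSpace ℝ (Fin n))

noncomputable def qf {n : ℕ} (A : Matrix (Fin n) (Fin n) ℝ) (z : EuclideanSpace ℝ (Fin n)) : ℝ :=
  ⟪z, Bmap A z⟫

lemma qf_eq {n : ℕ} (A : Matrix (Fin n) (Fin n) ℝ) (z : EuclideanSpace ℝ (Fin n)) :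
    qf A z = (fun i => z i) ⬝ᵥ (A *ᵥ fun i => z i) := by
  simp [qf, Bmap, PiLp.inner_apply, RCLike.inner_apply, dotProduct, conj_trivial]
  exact Finset.sum_congr rfl fun i _ => mul_comm _ _

lemma dot_self_eq_norm_sq {n : ℕ} (z : EuclideanSpace ℝ (Fin n)) :
    (fun i => z i) ⬝ᵥ (fun i => z i) = ‖z‖ ^ 2 := by
  rw [← real_inner_self_eq_norm_sq]
  simp [PiLp.inner_apply, RCLike.inner_apply, dotProduct, conj_trivial]
  rw [EuclideanSpace.norm_sq_eq]; simp [sq]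

lemma arith_term (l : ℕ) (dl qz Lz : ℝ) (hl1 : 1 ≤ l) (hdl : 0 ≤ dl) (hq : 0 ≤ qz)
    (hLz : Lz = 2 * qz) :
    2 * (dl * qz ^ l) ≤ dl * ((l : ℝ) * qz ^ (l - 1) * Lz) := by
  have hpow : qz ^ (l - 1) * qz = qz ^ l := by
    rw [← pow_succ, Nat.sub_add_cancel hl1]
  have hlr : (1 : ℝ) ≤ (l : ℝ) := by exact_mod_cast hl1
  have hql : 0 ≤ qz ^ l := pow_nonneg hq l
  have h := mul_le_mul_of_nonneg_right hlr (mul_nonneg hdl hql)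
  calc 2 * (dl * qz ^ l) ≤ 2 * ((l:ℝ) * (dl * qz ^ l)) := by nlinarith
  _ = dl * ((l : ℝ) * qz ^ (l - 1) * Lz) := by rw [hLz, ← hpow]; ring

lemma arith_lb (ctil r qz dk : ℝ) (k₁ : ℕ) (hk : 1 ≤ k₁) (hc : 0 < ctil) (hr : 1 ≤ r)
    (hq : ctil * r ^ 2 ≤ qz) (hd : ctil ≤ dk) :
    ctil ^ (k₁ + 1) * r ^ 2 ≤ dk * qz ^ k₁ := by
  have hr0 : (0:ℝ) ≤ r := by linarith
  have h2 : (ctil * r ^ 2) ^ k₁ ≤ qz ^ k₁ := pow_le_pow_left₀ (by positivity) hq k₁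
  have h3 : r ^ 2 ≤ (r ^ 2) ^ k₁ := le_self_pow₀ (by nlinarith) (by omega)
  have h4 : ctil ^ (k₁ + 1) * r ^ 2 ≤ ctil * (ctil * r ^ 2) ^ k₁ := by
    rw [mul_pow, pow_succ]
    have h5 : (0:ℝ) ≤ ctil ^ k₁ := by positivity
    have h7 := mul_le_mul_of_nonneg_left h3 (mul_nonneg hc.le h5)
    nlinarith [h7]
  calc ctil ^ (k₁ + 1) * r ^ 2 ≤ ctil * (ctil * r ^ 2) ^ k₁ := h4
  _ ≤ dk * qz ^ k₁ := mul_le_mul hd h2 (by positivity) (by linarith)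

lemma arith_large (c Kz G r : ℝ) (hc : 0 < c) (hK : 0 ≤ Kz) (hr : 1 ≤ r)
    (hlb : c * r ^ 2 ≤ Kz) (hCS : 2 * Kz ≤ G * r) (hG : 0 ≤ G) : c * Kz ≤ G ^ 2 := by
  have hr0 : (0:ℝ) < r := by linarith
  have hsq : 4 * Kz ^ 2 ≤ G ^ 2 * r ^ 2 := by nlinarith
  have h5 : 4 * (c * Kz * r ^ 2) ≤ G ^ 2 * r ^ 2 := by nlinarith
  have h6 : 4 * (c * Kz) ≤ G ^ 2 := by
    have := (mul_le_mul_iff_of_pos_right (by positivity : (0:ℝ) < r ^ 2)).mp (by linarith : (4 * (c * Kz)) * r ^ 2 ≤ G ^ 2 * r ^ 2)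
    linarith
  nlinarith [mul_nonneg hc.le hK]

/-- For `K(z) = Σ_{l=k₁}^{k₂} d_l (zᵀAz)^l` with `A` symmetric with eigenvalues
in `[c̃, C̃]`, `0 ≤ d_l ≤ C̃`, and `d_{k₁}, d_{k₂} ≥ c̃`, there exist `c > 0`, `M ≥ 0` with
`‖∇K(z)‖² + M ≥ c·K(z)` for all `z`. -/
theorem poly_kinetic_energy_coercivity
    (n : ℕ) (hn : 1 ≤ n) (k₁ k₂ : ℕ) (hk₁ : 1 ≤ k₁) (hk₁₂ : k₁ ≤ k₂)
    (ctil Ctil : ℝ) (hc : 0 < ctil) (hcC : ctil ≤ Ctil)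
    (A : Matrix (Fin n) (Fin n) ℝ) (hAsymm : A.IsSymm)
    (hAlb : ∀ x : Fin n → ℝ, ctil * (x ⬝ᵥ x) ≤ x ⬝ᵥ (A *ᵥ x))
    (hAub : ∀ x : Fin n → ℝ, x ⬝ᵥ (A *ᵥ x) ≤ Ctil * (x ⬝ᵥ x))
    (d : ℕ → ℝ)
    (hd : ∀ l ∈ Finset.Icc k₁ k₂, 0 ≤ d l ∧ d l ≤ Ctil)
    (hdk₁ : ctil ≤ d k₁) (hdk₂ : ctil ≤ d k₂)
    (K : EuclideanSpace ℝ (Fin n) → ℝ)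
    (hK : ∀ z : EuclideanSpace ℝ (Fin n),
      K z = ∑ l ∈ Finset.Icc k₁ k₂, d l * ((fun i => z i) ⬝ᵥ (A *ᵥ fun i => z i)) ^ l) :
    ∃ c > (0 : ℝ), ∃ M : ℝ, 0 ≤ M ∧ ∀ z, c * K z ≤ ‖gradient K z‖ ^ 2 + M := by
  have hCt : 0 < Ctil := lt_of_lt_of_le hc hcC
  have hKeq : K = fun z => ∑ l ∈ Finset.Icc k₁ k₂, d l * qf A z ^ l := by
    funext z; rw [hK z]
    exact (Finset.sum_congr rfl fun l _ => by rw [qf_eq]).symm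
  have hk₁mem : k₁ ∈ Finset.Icc k₁ k₂ := Finset.mem_Icc.mpr ⟨le_refl _, hk₁₂⟩
  -- basic bounds on qf
  have hq_lb : ∀ z : EuclideanSpace ℝ (Fin n), ctil * ‖z‖ ^ 2 ≤ qf A z := by
    intro z
    have := hAlb (fun i => z i)
    rw [dot_self_eq_norm_sq] at this
    rwa [qf_eq]
  have hq_ub : ∀ z : EuclideanSpace ℝ (Fin n), qf A z ≤ Ctil * ‖z‖ ^ 2 := by
    intro z
    have := hAub (fun i => z i)
    rw [dot_self_eq_norm_sq] at this
    rwa [qf_eq]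
  have hq_nonneg : ∀ z, 0 ≤ qf A z := fun z => le_trans (by positivity) (hq_lb z)
  -- gradient inequality
  have key : ∀ z : EuclideanSpace ℝ (Fin n), 2 * K z ≤ ⟪gradient K z, z⟫ := by
    intro z
    have hqd : HasFDerivAt (qf A) ((fderivInnerCLM ℝ (z, Bmap A z)).comp
        ((ContinuousLinearMap.id ℝ (EuclideanSpace ℝ (Fin n))).prod (Bmap A))) z :=
      (hasFDerivAt_id z).inner ℝ ((Bmap A).hasFDerivAt)
    set L := (fderivInnerCLM ℝ (z, Bmap A z)).comp
        ((ContinuousLinearMap.id ℝ (EuclideanSpace ℝ (Fin n))).prod (Bmap A)) with hLdef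
    have hLz : L z = 2 * qf A z := by
      rw [hLdef]
      simp [fderivInnerCLM_apply, qf]
      ring
    have hterm : ∀ l ∈ Finset.Icc k₁ k₂,
        HasFDerivAt (fun z => d l * qf A z ^ l)
          (d l • (((l : ℝ) * qf A z ^ (l - 1)) • L)) z :=
      fun l _ => ((hasDerivAt_pow l (qf A z)).comp_hasFDerivAt z hqd).const_mul (d l)
    have hKd : HasFDerivAt K
        (∑ l ∈ Finset.Icc k₁ k₂, d l • (((l : ℝ) * qf A z ^ (l - 1)) • L)) z := by
      rw [hKeq]; exact HasFDerivAt.fun_sum hterm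
    have hval : ⟪gradient K z, z⟫
        = ∑ l ∈ Finset.Icc k₁ k₂, d l * (((l : ℝ) * qf A z ^ (l - 1)) * L z) := by
      rw [(hasFDerivAt_iff_hasGradientAt.mp hKd).gradient, InnerProductSpace.toDual_symm_apply]
      simp [ContinuousLinearMap.sum_apply, ContinuousLinearMap.smul_apply, smul_eq_mul, mul_assoc]
    rw [hval, hKeq]
    rw [Finset.mul_sum]
    apply Finset.sum_le_sum
    intro l hl
    exact arith_term l (d l) (qf A z) (L z) (le_trans hk₁ (Finset.mem_Icc.mp hl).1)
      (hd l hl).1 (hq_nonneg z) hLz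
  -- Assemble
  refine ⟨ctil ^ (k₁ + 1), by positivity,
    ctil ^ (k₁ + 1) * ∑ l ∈ Finset.Icc k₁ k₂, Ctil * (max 1 Ctil) ^ l,
    by positivity, ?_⟩
  intro z
  have hG : 0 ≤ ‖gradient K z‖ ^ 2 := sq_nonneg _
  have hKnn : 0 ≤ K z := by
    rw [hKeq]
    exact Finset.sum_nonneg fun l hl => mul_nonneg (hd l hl).1 (pow_nonneg (hq_nonneg z) l)
  rcases le_or_gt ‖z‖ 1 with hz1 | hz1
  · -- small z : K bounded
    have hKle : K z ≤ ∑ l ∈ Finset.Icc k₁ k₂, Ctil * (max 1 Ctil) ^ l := by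
      rw [hKeq]
      apply Finset.sum_le_sum
      intro l hl
      have hqle : qf A z ≤ max 1 Ctil := by
        have h1 : ‖z‖ ^ 2 ≤ 1 := by nlinarith [norm_nonneg z]
        calc qf A z ≤ Ctil * ‖z‖ ^ 2 := hq_ub z
        _ ≤ Ctil * 1 := by nlinarith
        _ = Ctil := mul_one _
        _ ≤ max 1 Ctil := le_max_right 1 Ctil
      exact mul_le_mul (hd l hl).2 (pow_le_pow_left₀ (hq_nonneg z) hqle l)
        (pow_nonneg (hq_nonneg z) l) hCt.le
    have := mul_le_mul_of_nonneg_left hKle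
      (le_of_lt (show (0:ℝ) < ctil ^ (k₁+1) by positivity))
    linarith
  · -- large z
    have hKlb : ctil ^ (k₁ + 1) * ‖z‖ ^ 2 ≤ K z := by
      have h1 : d k₁ * qf A z ^ k₁ ≤ K z := by
        rw [hKeq]
        exact Finset.single_le_sum
          (fun l hl => mul_nonneg (hd l hl).1 (pow_nonneg (hq_nonneg z) l)) hk₁mem
      exact le_trans (arith_lb ctil ‖z‖ (qf A z) (d k₁) k₁ hk₁ hc hz1.le (hq_lb z) hdk₁) h1
    have hCS : 2 * K z ≤ ‖gradient K z‖ * ‖z‖ :=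
      le_trans (key z) (real_inner_le_norm _ _)
    have h6 : ctil ^ (k₁ + 1) * K z ≤ ‖gradient K z‖ ^ 2 :=
      arith_large _ _ _ _ (by positivity) hKnn hz1.le hKlb hCS (norm_nonneg _)
    have hM : (0:ℝ) ≤ ctil ^ (k₁+1) * ∑ l ∈ Finset.Icc k₁ k₂, Ctil * (max 1 Ctil) ^ l := by
      positivity
    linarith
end
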